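/- arXiv:math-ph/0201008 — 9 statements merged into one kernel-verified Lean document; each statement's English description precedes it below -/
import Mathlib

section
/- Let f : ℝ → ℝ be continuously differentiable, let ε ∈ ℝ, and let g : ℝ → ℂ be a continuously differentiable solution of the generalised Riccati equation g'(t) − i·g(t)² − 2i·f(t)·g(t) + i·ε² = 0 for all t ∈ ℝ. Define R(t) = exp(−i·∫₀ᵗ (f(τ)+g(τ)) dτ) and S(t) = ∫₀ᵗ R(τ)⁻² dτ, and let U(t) be the 2×2 complex matrix with entries U₁₁(t) = R(t)·(1 + i·g(0)·S(t)), U₁₂(t) = −i·ε·R(t)·S(t), U₂₁(t) = −i·ε·conj(R(t))·conj(S(t)), U₂₂(t) = conj(R(t))·(1 − i·conj(g(0))·conj(S(t))). Then for every Φ₀ ∈ ℂ², the function Φ(t) = U(t)·Φ₀ satisfies Φ(0) = Φ₀ and the Schrödinger equation i·Φ'(t) = (ε·σ₁ + f(t)·σ₃)·Φ(t) for all t ∈ ℝ. -/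
open Matrix

noncomputable section

/-!
The second column of `U` is the image of the first under `(u, v) ↦ (-v̄, ū)`, which maps
solutions to solutions because `ε σ₁ + f σ₃` is real, so by linearity it suffices that the first
column is a solution. Because `R' = -i (f + g) R`, `S' = R⁻²` and `g` solves the Riccati equation,
the defects `(P, Q)` of the first column satisfy the closed linear system `P' = i f P + i ε² Q`,
`Q' = i P - i f Q`; they vanish at `t = 0`, hence everywhere by Grönwall's inequality.
-/

theorem eq_zero_of_norm_deriv_le_mul_norm_of_nonneg {E : Type*} [NormedAddCommGroup E]
    [NormedSpace ℝ E] {K : ℝ → ℝ} (hK : Continuous K) {x x' : ℝ → E}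
    (hx : ∀ t, HasDerivAt x (x' t) t) (bound : ∀ t, ‖x' t‖ ≤ K t * ‖x t‖) (h0 : x 0 = 0)
    {t : ℝ} (ht : 0 ≤ t) : x t = 0 := by
  obtain ⟨C, hC⟩ :=
    isCompact_Icc.exists_bound_of_continuousOn (hK.continuousOn (s := Set.Icc 0 t))
  refine eq_zero_of_abs_deriv_le_mul_abs_self_of_eq_zero_right (K := C)
    (fun s _ => (hx s).continuousAt.continuousWithinAt) (fun s _ => (hx s).hasDerivWithinAt) h0
    (fun s hs => (bound s).trans ?_) t ⟨ht, le_rfl⟩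
  exact mul_le_mul_of_nonneg_right ((le_abs_self _).trans (hC s (Set.Ico_subset_Icc_self hs)))
    (norm_nonneg _)

theorem eq_zero_of_norm_deriv_le_mul_norm {E : Type*} [NormedAddCommGroup E]
    [NormedSpace ℝ E] {K : ℝ → ℝ} (hK : Continuous K) {x x' : ℝ → E}
    (hx : ∀ t, HasDerivAt x (x' t) t) (bound : ∀ t, ‖x' t‖ ≤ K t * ‖x t‖) (h0 : x 0 = 0)
    (t : ℝ) : x t = 0 := by
  rcases le_total 0 t with ht | ht
  · exact eq_zero_of_norm_deriv_le_mul_norm_of_nonneg hK hx bound h0 ht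
  · simpa using eq_zero_of_norm_deriv_le_mul_norm_of_nonneg (x := fun s => x (-s))
      (x' := fun s => -x' (-s)) (hK.comp continuous_neg)
      (fun s => by simpa [Function.comp_def] using (hx (-s)).scomp s (hasDerivAt_neg s))
      (fun s => by simpa using bound (-s)) (by simpa using h0) (neg_nonneg.2 ht)

theorem norm_prodMk_mul_add_mul_le {𝕜 : Type*} [SeminormedRing 𝕜] (a b c d x y : 𝕜) :
    ‖(a * x + b * y, c * x + d * y)‖ ≤ (‖a‖ + ‖b‖ + ‖c‖ + ‖d‖) * ‖(x, y)‖ := by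
  have row (p q : 𝕜) : ‖p * x + q * y‖ ≤ (‖p‖ + ‖q‖) * ‖(x, y)‖ :=
    calc ‖p * x + q * y‖ ≤ ‖p‖ * ‖x‖ + ‖q‖ * ‖y‖ :=
          (norm_add_le _ _).trans (add_le_add (norm_mul_le _ _) (norm_mul_le _ _))
      _ ≤ (‖p‖ + ‖q‖) * ‖(x, y)‖ := by
          rw [add_mul]
          gcongr
          exacts [norm_fst_le (x, y), norm_snd_le (x, y)]
  have hxy := norm_nonneg (x, y)
  refine max_le ((row a b).trans ?_) ((row c d).trans ?_) <;>
    nlinarith [norm_nonneg a, norm_nonneg b, norm_nonneg c, norm_nonneg d]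

open Complex ComplexConjugate

def pauliHamiltonian (ε : ℝ) (f : ℝ → ℝ) (t : ℝ) : Matrix (Fin 2) (Fin 2) ℂ :=
  (ε : ℂ) • !![0, 1; 1, 0] + (f t : ℂ) • !![1, 0; 0, -1]

def IsSchrodingerSolution (ε : ℝ) (f : ℝ → ℝ) (Φ : ℝ → Fin 2 → ℂ) : Prop :=
  ∀ t, HasDerivAt Φ (-I • (pauliHamiltonian ε f t).mulVec (Φ t)) t

theorem pauliHamiltonian_mulVec (ε : ℝ) (f : ℝ → ℝ) (t : ℝ) (u v : ℂ) :
    pauliHamiltonian ε f t *ᵥ ![u, v] = ![f t * u + ε * v, ε * u - f t * v] := by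
  ext i
  fin_cases i <;> simp [pauliHamiltonian, mul_comm, sub_eq_add_neg]

namespace IsSchrodingerSolution

variable {ε : ℝ} {f : ℝ → ℝ}

theorem vecCons_iff {u v : ℝ → ℂ} :
    IsSchrodingerSolution ε f (fun t => ![u t, v t]) ↔ ∀ t,
      HasDerivAt u (-I * (f t * u t + ε * v t)) t ∧
      HasDerivAt v (-I * (ε * u t - f t * v t)) t := by
  simp only [IsSchrodingerSolution, pauliHamiltonian_mulVec, hasDerivAt_pi, Fin.forall_fin_two,
    Pi.smul_apply, cons_val_zero, cons_val_one, smul_eq_mul]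

theorem add {Φ Ψ : ℝ → Fin 2 → ℂ} (hΦ : IsSchrodingerSolution ε f Φ)
    (hΨ : IsSchrodingerSolution ε f Ψ) : IsSchrodingerSolution ε f (Φ + Ψ) := fun t => by
  simpa only [Pi.add_apply, mulVec_add, smul_add] using (hΦ t).add (hΨ t)

theorem const_smul {Φ : ℝ → Fin 2 → ℂ} (c : ℂ) (hΦ : IsSchrodingerSolution ε f Φ) :
    IsSchrodingerSolution ε f (c • Φ) := fun t => by
  simpa only [Pi.smul_apply, mulVec_smul, smul_comm c] using (hΦ t).const_smul c

theorem conj_swap {u v : ℝ → ℂ} (h : IsSchrodingerSolution ε f (fun t => ![u t, v t])) :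
    IsSchrodingerSolution ε f (fun t => ![-conj (v t), conj (u t)]) := by
  rw [vecCons_iff] at h ⊢
  intro t
  obtain ⟨hu, hv⟩ := h t
  refine ⟨hv.star.neg.congr_deriv ?_, hu.star.congr_deriv ?_⟩ <;>
    simp only [star_mul', star_add, star_sub, star_neg, RCLike.star_def, conj_I, conj_ofReal] <;>
    ring

end IsSchrodingerSolution

section FirstColumn

variable {ε : ℝ} {f : ℝ → ℝ} {g R S : ℝ → ℂ}

/-- The pair `(P, Q)`, where `P` and `ε Q` are what the first column
`(R (1 + i g(0) S), -i ε R̄ S̄)` of `U` misses in the two components of the Schrödinger equation. -/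
def firstColumnDefect (ε : ℝ) (g R S : ℝ → ℂ) (t : ℝ) : ℂ × ℂ :=
  (-I * g t * R t + g t * g 0 * R t * S t + I * g 0 * (R t)⁻¹ + ε ^ 2 * conj (R t) * conj (S t),
    conj (g t) * conj (R t) * conj (S t) - I * (conj (R t))⁻¹ + I * R t - g 0 * R t * S t)

theorem hasDerivAt_firstColumnDefect
    (hg : ∀ t, HasDerivAt g (I * g t ^ 2 + 2 * I * f t * g t - I * ε ^ 2) t)
    (hR : ∀ t, HasDerivAt R (-I * (f t + g t) * R t) t) (hR0 : ∀ t, R t ≠ 0)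
    (hS : ∀ t, HasDerivAt S (R t ^ 2)⁻¹ t) (t : ℝ) :
    HasDerivAt (firstColumnDefect ε g R S)
      (I * f t * (firstColumnDefect ε g R S t).1 + I * ε ^ 2 * (firstColumnDefect ε g R S t).2,
        I * (firstColumnDefect ε g R S t).1 - I * f t * (firstColumnDefect ε g R S t).2) t := by
  have hRt := hR0 t
  have hRt' : conj (R t) ≠ 0 := (map_ne_zero _).2 hRt
  refine HasDerivAt.prodMk
    ((((((hg t).const_mul (-I)).mul (hR t)).add
      ((((hg t).mul_const (g 0)).mul (hR t)).mul (hS t))).add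
      (((hR t).inv hRt).const_mul (I * g 0))).add
      (((hR t).star.const_mul ((ε : ℂ) ^ 2)).mul (hS t).star) |>.congr_deriv ?_)
    ((((((hg t).star.mul (hR t).star).mul (hS t).star).sub
      (((hR t).star.inv hRt').const_mul I)).add ((hR t).const_mul I)).sub
      (((hR t).const_mul (g 0)).mul (hS t)) |>.congr_deriv ?_) <;>
  · simp only [firstColumnDefect, Pi.mul_apply, star_mul', star_add, star_sub, star_neg,
      star_inv₀, star_pow, star_ofNat, RCLike.star_def, conj_I, conj_ofReal]
    field_simp
    ring_nf
    simp only [I_sq]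
    ring_nf

theorem firstColumnDefect_eq_zero (hf : Continuous f)
    (hg : ∀ t, HasDerivAt g (I * g t ^ 2 + 2 * I * f t * g t - I * ε ^ 2) t)
    (hR : ∀ t, HasDerivAt R (-I * (f t + g t) * R t) t) (hR0 : ∀ t, R t ≠ 0)
    (hS : ∀ t, HasDerivAt S (R t ^ 2)⁻¹ t) (hR00 : R 0 = 1) (hS00 : S 0 = 0) (t : ℝ) :
    firstColumnDefect ε g R S t = 0 := by
  refine eq_zero_of_norm_deriv_le_mul_norm
    (K := fun t => ‖I * f t‖ + ‖I * ε ^ 2‖ + ‖I‖ + ‖-(I * f t)‖) (by fun_prop)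
    (hasDerivAt_firstColumnDefect hg hR hR0 hS) (fun t => ?_) ?_ t
  · simpa only [neg_mul, ← sub_eq_add_neg] using norm_prodMk_mul_add_mul_le (I * f t)
      (I * ε ^ 2) I (-(I * f t)) (firstColumnDefect ε g R S t).1 (firstColumnDefect ε g R S t).2
  · simp [firstColumnDefect, hR00, hS00]

theorem isSchrodingerSolution_firstColumn (hf : Continuous f)
    (hg : ∀ t, HasDerivAt g (I * g t ^ 2 + 2 * I * f t * g t - I * ε ^ 2) t)
    (hR : ∀ t, HasDerivAt R (-I * (f t + g t) * R t) t) (hR0 : ∀ t, R t ≠ 0)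
    (hS : ∀ t, HasDerivAt S (R t ^ 2)⁻¹ t) (hR00 : R 0 = 1) (hS00 : S 0 = 0) :
    IsSchrodingerSolution ε f
      (fun t => ![R t * (1 + I * g 0 * S t), -I * ε * conj (R t) * conj (S t)]) := by
  rw [IsSchrodingerSolution.vecCons_iff]
  intro t
  have hRt := hR0 t
  obtain ⟨hP, hQ⟩ := Prod.ext_iff.1 (firstColumnDefect_eq_zero hf hg hR hR0 hS hR00 hS00 t)
  simp only [firstColumnDefect, Prod.fst_zero, Prod.snd_zero] at hP hQ
  constructor
  · refine (hR t).mul (((hS t).const_mul (I * g 0)).const_add 1) |>.congr_deriv ?_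
    linear_combination (norm := (ring_nf; simp only [I_sq]; ring))
      hP + I * g 0 * (R t)⁻¹ * mul_inv_cancel₀ hRt
  · refine ((hR t).star.const_mul (-I * ε)).mul (hS t).star |>.congr_deriv ?_
    simp only [star_mul', star_add, star_neg, star_inv₀, star_pow, RCLike.star_def, conj_I,
      conj_ofReal]
    linear_combination (norm := (ring_nf; simp only [I_sq]; ring))
      ε * hQ - I * ε * (conj (R t))⁻¹ * mul_inv_cancel₀ ((map_ne_zero conj).2 hRt)

end FirstColumn

theorem hasDerivAt_cexp_neg_I_mul_integral {h : ℝ → ℂ} (hh : Continuous h) (t : ℝ) :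
    HasDerivAt (fun t => cexp (-I * ∫ τ in (0 : ℝ)..t, h τ))
      (-I * h t * cexp (-I * ∫ τ in (0 : ℝ)..t, h τ)) t := by
  simpa [mul_comm] using ((hh.integral_hasStrictDerivAt 0 t).hasDerivAt.const_mul (-I)).cexp

theorem schrodinger_solution_via_riccati
    (f : ℝ → ℝ) (hf : ContDiff ℝ 1 f) (ε : ℝ)
    (g : ℝ → ℂ) (hg : ContDiff ℝ 1 g)
    (hric : ∀ t : ℝ,
      deriv g t - Complex.I * (g t) ^ 2 - 2 * Complex.I * (f t : ℂ) * g t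
        + Complex.I * (ε : ℂ) ^ 2 = 0)
    (R S : ℝ → ℂ)
    (hR : ∀ t : ℝ, R t = Complex.exp (-Complex.I * ∫ τ in (0:ℝ)..t, ((f τ : ℂ) + g τ)))
    (hS : ∀ t : ℝ, S t = ∫ τ in (0:ℝ)..t, ((R τ) ^ 2)⁻¹)
    (U : ℝ → Matrix (Fin 2) (Fin 2) ℂ)
    (hU : ∀ t : ℝ, U t =
      !![R t * (1 + Complex.I * g 0 * S t),
         -Complex.I * (ε : ℂ) * R t * S t;
         -Complex.I * (ε : ℂ) * (starRingEnd ℂ) (R t) * (starRingEnd ℂ) (S t),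
         (starRingEnd ℂ) (R t) * (1 - Complex.I * (starRingEnd ℂ) (g 0) * (starRingEnd ℂ) (S t))])
    (Φ₀ : Fin 2 → ℂ) (Φ : ℝ → Fin 2 → ℂ)
    (hΦ : ∀ t : ℝ, Φ t = (U t).mulVec Φ₀) :
    Φ 0 = Φ₀ ∧
    ∀ t : ℝ, HasDerivAt Φ
      ((-Complex.I) • (((ε : ℂ) • (!![0, 1; 1, 0] : Matrix (Fin 2) (Fin 2) ℂ)
        + (f t : ℂ) • (!![1, 0; 0, -1] : Matrix (Fin 2) (Fin 2) ℂ)).mulVec (Φ t))) t := by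
  have hgd (t : ℝ) : HasDerivAt g (I * g t ^ 2 + 2 * I * f t * g t - I * ε ^ 2) t :=
    ((hg.differentiable one_ne_zero) t).hasDerivAt.congr_deriv (by linear_combination hric t)
  have hRd (t : ℝ) : HasDerivAt R (-I * (f t + g t) * R t) t := by
    rw [funext hR]
    exact hasDerivAt_cexp_neg_I_mul_integral (by fun_prop) t
  have hR0 (t : ℝ) : R t ≠ 0 := hR t ▸ exp_ne_zero _
  have hSd (t : ℝ) : HasDerivAt S (R t ^ 2)⁻¹ t := by
    have hRc : Continuous R := continuous_iff_continuousAt.2 fun t => (hRd t).continuousAt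
    rw [funext hS]
    exact ((hRc.pow 2).inv₀ fun τ => pow_ne_zero 2 (hR0 τ)).integral_hasStrictDerivAt 0 t
      |>.hasDerivAt
  have hR00 : R 0 = 1 := by simp [hR]
  have hS00 : S 0 = 0 := by simp [hS]
  have hcol := isSchrodingerSolution_firstColumn hf.continuous hgd hRd hR0 hSd hR00 hS00
  have hΦ_eq : Φ =
      Φ₀ 0 • (fun t => ![R t * (1 + I * g 0 * S t), -I * ε * conj (R t) * conj (S t)]) +
        Φ₀ 1 • (fun t => ![-conj (-I * ε * conj (R t) * conj (S t)),
          conj (R t * (1 + I * g 0 * S t))]) := by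
    ext t i
    fin_cases i <;>
      simp [hΦ, hU, mulVec, dotProduct, mul_comm, mul_left_comm, mul_assoc, sub_eq_add_neg]
  constructor
  · ext i
    fin_cases i <;> simp [hΦ, hU, hR00, hS00, mulVec, dotProduct]
  · rw [hΦ_eq]
    exact (hcol.const_smul _).add (hcol.conj_swap.const_smul _)
end
end

section
/- Let ω > 0, T = 2π/ω, and let f : ℝ → ℝ be continuous, T-periodic, with ∫₀ᵀ f(τ) dτ = 0. Define q(t) = exp(i·∫₀ᵗ f(τ) dτ), Q₀ = q², Q₁(t) = Q₀(t)·∫₀ᵗ conj(Q₀(τ)) dτ, and Q₃(t) = Q₀(t)·∫₀ᵗ Q₁(τ) dτ. Assume condition (III): the mean values M(Q₀), M(Q₁), M(Q₃) exist, M(Q₀) = 0, M(Q₁) = 0, and M(Q₃) ≠ 0. Then there exists a sequence of constants κ : ℕ → ℂ such that all the functions v_n : ℝ → ℂ defined recursively by v₁(t) = κ₁·q(t), v₂(t) = q(t)·( i·∫₀ᵗ (κ₁²·Q₀(τ) − conj(Q₀(τ))) dτ + κ₂ ), and v_n(t) = q(t)·( i·∫₀ᵗ Σ_{p=1}^{n−1}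 v_p(τ)·v_{n−p}(τ) dτ + κ_n ) for n ≥ 3, are T-periodic. -/
open Filter

noncomputable section

/-- The mean value `M(h)` of a function `h : ℝ → ℂ`:
`M(h) = L` iff `(1/(2T)) ∫_{-T}^{T} h(t) dt → L` as `T → +∞`. -/
def MeanValueIs (h : ℝ → ℂ) (L : ℂ) : Prop :=
  Tendsto (fun T : ℝ => (1 / (2 * T)) • ∫ t in (-T)..T, h t) atTop (nhds L)

/-!
Write `v n = q * w n`. Since `q ^ 2 = Q₀`, the recursion for `v` becomes
`w n t = i ∫₀ᵗ (Q₀ · ∑_{p=1}^{n-1} w p · w (n-p) - [n = 2] conj Q₀) + κ n`, and once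
`w 1, …, w (n-1)` are `T`-periodic, `w n` is periodic iff the secular integral `S n` of the
integrand over `[0, T]` vanishes.

With `A = ∫₀ᵗ Q₀` and `J = ∫₀ᵗ conj Q₀ = conj A`, condition (III) says `A T = 0`,
`∫₀ᵀ Q₀ J = 0` and `K = ∫₀ᵀ Q₃ = T · M(Q₃) ≠ 0`. Integrating by parts against `A`, which vanishes
at both ends, reduces every secular integral needed to `K` and the moments `∫₀ᵀ Q₀ A^a J^b`,
`a + b ≤ 2`. This gives `S 1 = S 2 = S 3 = 0` for all constants, and `S 4 = 2 κ₁² K - 2 conj K`,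
which vanishes for `κ₁² = conj K / K`. If two choices of constants agree below `m ≥ 2`, the difference
`d = w - w'` vanishes below `m` and solves the linearised recursion with source
`Q₀ · ∑ d p · (w + w') (n-p)`; evaluating it up to order `m + 2` shows that `S (m + 3)` changes by
exactly `4 κ₁ K (κ m - κ' m)`. Hence `κ m` can be chosen recursively so that `S (m + 3) = 0`.
-/

open Function Finset intervalIntegral Complex ComplexConjugate

section Primitive

variable {E : Type*} [NormedAddCommGroup E] [NormedSpace ℝ E]

def prim (g : ℝ → E) (t : ℝ) : E := ∫ τ in (0:ℝ)..t, g τ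

@[simp] lemma prim_zero (g : ℝ → E) : prim g 0 = 0 := integral_same

lemma hasDerivAt_prim [CompleteSpace E] {g : ℝ → E} (hg : Continuous g) (t : ℝ) :
    HasDerivAt (prim g) (g t) t :=
  (hg.integral_hasStrictDerivAt 0 t).hasDerivAt

@[fun_prop]
lemma continuous_prim {g : ℝ → E} (hg : Continuous g) : Continuous (prim g) :=
  continuous_primitive (fun _ _ => hg.intervalIntegrable _ _) 0

lemma Function.Periodic.prim {g : ℝ → E} {T : ℝ} (hg : Periodic g T) (hgc : Continuous g)
    (h0 : prim g T = 0) : Periodic (prim g) T := fun t => by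
  unfold _root_.prim at h0 ⊢
  rw [hg.intervalIntegral_add_eq_add 0 t fun _ _ => hgc.intervalIntegrable _ _, zero_add, h0,
    add_zero]

end Primitive

lemma integral_mul_eq_neg_integral_prim_mul {𝔸 : Type*} [NormedRing 𝔸] [NormedAlgebra ℝ 𝔸]
    [CompleteSpace 𝔸] {g v v' : ℝ → 𝔸} {T : ℝ} (hg : Continuous g)
    (hv : ∀ t, HasDerivAt v (v' t) t) (hv' : Continuous v') (hT : prim g T = 0) :
    ∫ t in (0:ℝ)..T, g t * v t = -∫ t in (0:ℝ)..T, prim g t * v' t := by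
  rw [integral_mul_deriv_eq_deriv_mul (fun t _ => hasDerivAt_prim hg t) (fun t _ => hv t)
    (hg.intervalIntegrable _ _) (hv'.intervalIntegrable _ _), hT]
  simp

theorem MeanValueIs.integral_eq {g : ℝ → ℂ} {L : ℂ} {T : ℝ} (hT : 0 < T) (hg : Continuous g)
    (hgT : Periodic g T) (h : MeanValueIs g L) : ∫ t in (0:ℝ)..T, g t = T * L := by
  have hS : Tendsto (fun m : ℕ => ((m : ℝ) + 1) * T) atTop atTop :=
    (tendsto_atTop_add_const_right _ 1 tendsto_natCast_atTop_atTop).atTop_mul_const hT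
  have hmean (m : ℕ) :
      (1 / (2 * (((m : ℝ) + 1) * T))) • ∫ t in -(((m : ℝ) + 1) * T)..((m + 1) * T), g t
        = (1 / T) • ∫ t in (0:ℝ)..T, g t := by
    have hm := hgT.intervalIntegral_add_zsmul_eq (2 * (m + 1)) (-(((m : ℝ) + 1) * T))
      fun _ _ => hg.intervalIntegrable _ _
    rw [hgT.intervalIntegral_add_eq _ 0, zero_add,
      show -(((m : ℝ) + 1) * T) + ((2 * (m + 1) : ℤ) • T) = (m + 1) * T by
        rw [zsmul_eq_mul]; push_cast; ring] at hm
    rw [hm, ← Int.cast_smul_eq_zsmul ℝ, smul_smul]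
    congr 1
    push_cast
    field_simp
  have := tendsto_nhds_unique (h.comp hS) (tendsto_const_nhds.congr fun m => (hmean m).symm)
  have hT' : (T : ℂ) ≠ 0 := Complex.ofReal_ne_zero.2 hT.ne'
  rw [this, Complex.real_smul, ← mul_assoc, Complex.ofReal_div, Complex.ofReal_one,
    mul_one_div_cancel hT', one_mul]

def seqConv {R : Type*} [Semiring R] (a b : ℕ → R) (n : ℕ) : R :=
  ∑ p ∈ Ico 1 n, a p * b (n - p)

section SeqConv

variable {R : Type*} [CommRing R]

lemma seqConv_comm (a b : ℕ → R) (n : ℕ) : seqConv a b n = seqConv b a n := by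
  have := sum_Ico_reflect (fun p => b p * a (n - p)) 1 (Nat.le_succ n)
  rw [Nat.add_sub_cancel, Nat.add_sub_cancel_left] at this
  rw [seqConv, seqConv, ← this]
  refine sum_congr rfl fun p hp => ?_
  rw [Nat.sub_sub_self (mem_Ico.1 hp).2.le, mul_comm]

lemma seqConv_self_sub_seqConv_self (a b : ℕ → R) (n : ℕ) :
    seqConv a a n - seqConv b b n = seqConv (fun p => a p - b p) (fun p => a p + b p) n :=
  calc seqConv a a n - seqConv b b n
      = seqConv a a n - seqConv b b n + (seqConv a b n - seqConv b a n) := by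
        rw [seqConv_comm a b, sub_self, add_zero]
    _ = _ := by
        simp only [seqConv, ← sum_sub_distrib, ← sum_add_distrib]
        exact sum_congr rfl fun p _ => by ring

lemma seqConv_eq_zero {a : ℕ → R} (b : ℕ → R) {n : ℕ} (ha : ∀ p < n, a p = 0) :
    seqConv a b n = 0 :=
  sum_eq_zero fun p hp => by rw [ha p (mem_Ico.1 hp).2, zero_mul]

lemma seqConv_add_eq_sum_range {a : ℕ → R} (b : ℕ → R) {m : ℕ} (hm : 1 ≤ m)
    (ha : ∀ p < m, a p = 0) (k : ℕ) :
    seqConv a b (m + k) = ∑ i ∈ range k, a (m + i) * b (k - i) := by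
  rw [seqConv, ← sum_Ico_consecutive _ hm (m.le_add_right k),
    sum_eq_zero (s := Ico 1 m) fun p hp => by rw [ha p (mem_Ico.1 hp).2, zero_mul], zero_add,
    sum_Ico_eq_sum_range, Nat.add_sub_cancel_left]
  refine sum_congr rfl fun i _ => ?_
  rw [Nat.add_sub_add_left]

end SeqConv

namespace SecularTerms

/-- The `w n` above, with `Q = Q₀` and constants `σ = κ`. -/
def reducedTerm (Q : ℝ → ℂ) (σ : ℕ → ℂ) : ℕ → ℝ → ℂ
  | n => fun t => I * (∫ τ in (0:ℝ)..t, (Q τ * ∑ p ∈ (Ico 1 n).attach,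
        reducedTerm Q σ p.1 τ * reducedTerm Q σ (n - p.1) τ - if n = 2 then conj (Q τ) else 0))
      + σ n
termination_by n => n
decreasing_by all_goals have := mem_Ico.1 p.2; omega

variable {Q : ℝ → ℂ} {σ σ' : ℕ → ℂ} {T : ℝ} {m : ℕ}

local notation "A" => prim Q
local notation "J" => prim (fun τ => conj (Q τ))
local notation "K" => ∫ t in (0:ℝ)..T, Q t * prim (fun τ => Q τ * J τ) t

variable (Q σ) in
def reducedSource (n : ℕ) (τ : ℝ) : ℂ :=
  Q τ * seqConv (reducedTerm Q σ · τ) (reducedTerm Q σ · τ) n - if n = 2 then conj (Q τ) else 0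

variable (Q σ T) in
def secularIntegral (n : ℕ) : ℂ := ∫ τ in (0:ℝ)..T, reducedSource Q σ n τ

lemma reducedTerm_apply (n : ℕ) (t : ℝ) :
    reducedTerm Q σ n t = I * prim (reducedSource Q σ n) t + σ n := by
  rw [reducedTerm, prim]
  refine congrArg (I * · + σ n) (integral_congr fun τ _ => ?_)
  rw [reducedSource, seqConv,
    ← sum_attach (Ico 1 n) fun p => reducedTerm Q σ p τ * reducedTerm Q σ (n - p) τ]

@[simp] lemma reducedTerm_one (t : ℝ) : reducedTerm Q σ 1 t = σ 1 := by
  rw [reducedTerm_apply]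
  simp [reducedSource, seqConv, prim]

lemma continuous_reducedSource_of_lt {n : ℕ} (hQ : Continuous Q)
    (h : ∀ p < n, Continuous (reducedTerm Q σ p)) : Continuous (reducedSource Q σ n) := by
  refine (hQ.mul (continuous_finsetSum _ fun p hp => ?_)).sub ?_
  · have := mem_Ico.1 hp
    exact (h p (by omega)).mul (h _ (by omega))
  · split_ifs
    exacts [continuous_conj.comp hQ, continuous_const]

@[fun_prop]
lemma continuous_reducedTerm (hQ : Continuous Q) (n : ℕ) : Continuous (reducedTerm Q σ n) := by
  induction n using Nat.strong_induction_on with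
  | _ n ih =>
    simp_rw [funext (reducedTerm_apply (σ := σ) n)]
    have := continuous_reducedSource_of_lt hQ ih
    fun_prop

lemma continuous_reducedSource (hQ : Continuous Q) (n : ℕ) :
    Continuous (reducedSource Q σ n) :=
  continuous_reducedSource_of_lt hQ fun p _ => continuous_reducedTerm hQ p

lemma periodic_reducedTerm (hQ : Continuous Q) (hQT : Periodic Q T)
    (hS : ∀ n, secularIntegral Q σ T n = 0) (n : ℕ) : Periodic (reducedTerm Q σ n) T := by
  induction n using Nat.strong_induction_on with
  | _ n ih =>
    have hsource : Periodic (reducedSource Q σ n) T := fun τ => by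
      simp only [reducedSource, seqConv, hQT τ]
      congr 2
      refine sum_congr rfl fun p hp => ?_
      have := mem_Ico.1 hp
      rw [ih p (by omega), ih (n - p) (by omega)]
    intro t
    rw [reducedTerm_apply, reducedTerm_apply,
      hsource.prim (continuous_reducedSource hQ n) (hS n)]

lemma reducedSource_two (τ : ℝ) : reducedSource Q σ 2 τ = σ 1 ^ 2 * Q τ - conj (Q τ) := by
  simp only [reducedSource, seqConv, if_pos]
  norm_num
  ring

lemma reducedSource_three (τ : ℝ) :
    reducedSource Q σ 3 τ = 2 * σ 1 * (Q τ * reducedTerm Q σ 2 τ) := by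
  simp [reducedSource, seqConv, sum_Ico_succ_top, -mul_eq_mul_left_iff]
  ring

lemma reducedSource_four (τ : ℝ) : reducedSource Q σ 4 τ
    = Q τ * (2 * σ 1 * reducedTerm Q σ 3 τ + reducedTerm Q σ 2 τ ^ 2) := by
  simp [reducedSource, seqConv, sum_Ico_succ_top, -mul_eq_mul_left_iff]
  ring

lemma reducedTerm_two (hQ : Continuous Q) (t : ℝ) :
    reducedTerm Q σ 2 t = σ 2 + I * σ 1 ^ 2 * A t - I * J t := by
  rw [reducedTerm_apply, prim, integral_congr fun τ _ => reducedSource_two τ]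
  simp (disch := exact Continuous.intervalIntegrable (by fun_prop) _ _) only
    [intervalIntegral.integral_sub, intervalIntegral.integral_const_mul]
  simp only [prim]
  ring

lemma conj_prim (t : ℝ) : conj (A t) = J t := by
  simp only [prim, intervalIntegral_conj]

lemma conj_prim_conj (t : ℝ) : conj (J t) = A t := by
  rw [← conj_prim, Complex.conj_conj]

lemma integral_mul_prim (hQ : Continuous Q) (hA : A T = 0) :
    ∫ t in (0:ℝ)..T, Q t * A t = 0 := by
  have h := integral_mul_eq_neg_integral_prim_mul hQ (hasDerivAt_prim hQ) hQ hA
  simp_rw [mul_comm (A _) (Q _)] at h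
  exact self_eq_neg.1 h

lemma integral_mul_prim_sq (hQ : Continuous Q) (hA : A T = 0) :
    ∫ t in (0:ℝ)..T, Q t * A t ^ 2 = 0 := by
  have h := integral_mul_eq_neg_integral_prim_mul hQ
    (fun t => (hasDerivAt_prim hQ t).fun_pow 2) (by fun_prop) hA
  have : ∫ t in (0:ℝ)..T, A t * (((2:ℕ):ℂ) * A t ^ (2 - 1) * Q t)
      = 2 * ∫ t in (0:ℝ)..T, Q t * A t ^ 2 := by
    rw [← integral_const_mul]
    exact integral_congr fun t _ => by ring
  rw [this] at h
  linear_combination h / 3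

lemma integral_mul_prim_mul_prim_conj (hQ : Continuous Q) (hA : A T = 0) :
    ∫ t in (0:ℝ)..T, Q t * A t * J t = -K := by
  have h := integral_mul_eq_neg_integral_prim_mul hQ
    (hasDerivAt_prim (g := fun τ => Q τ * J τ) (by fun_prop)) (by fun_prop) hA
  simp_rw [← mul_assoc, mul_comm (A _) (Q _)] at h
  rw [h, neg_neg]

lemma integral_mul_prim_conj_sq (hQ : Continuous Q) (hA : A T = 0) :
    ∫ t in (0:ℝ)..T, Q t * J t ^ 2 = 2 * conj K := by
  have h := integral_mul_eq_neg_integral_prim_mul hQ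
    (fun t => (hasDerivAt_prim (g := fun τ => conj (Q τ)) (by fun_prop) t).fun_pow 2)
    (by fun_prop) hA
  have : ∫ t in (0:ℝ)..T, A t * (((2:ℕ):ℂ) * J t ^ (2 - 1) * conj (Q t))
      = 2 * conj (∫ t in (0:ℝ)..T, Q t * A t * J t) := by
    rw [← intervalIntegral_conj, ← integral_const_mul]
    refine integral_congr fun t _ => ?_
    rw [map_mul, map_mul, conj_prim_conj, conj_prim]
    ring
  rw [h, this, integral_mul_prim_mul_prim_conj hQ hA, map_neg]
  ring

lemma integral_mul_quadratic (hQ : Continuous Q) (hA : A T = 0)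
    (hB : ∫ t in (0:ℝ)..T, Q t * J t = 0) {P : ℝ → ℂ} (a b c d e f : ℂ)
    (hP : ∀ t, P t = a + b * A t + c * A t ^ 2 + d * J t + e * (A t * J t) + f * J t ^ 2) :
    ∫ t in (0:ℝ)..T, Q t * P t = 2 * f * conj K - e * K := by
  have hexpand : ∀ t, Q t * P t = a * Q t + b * (Q t * A t) + c * (Q t * A t ^ 2)
      + d * (Q t * J t) + e * (Q t * A t * J t) + f * (Q t * J t ^ 2) := fun t => by
    rw [hP]
    ring
  simp_rw [hexpand]
  simp (disch := exact Continuous.intervalIntegrable (by fun_prop) _ _) only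
    [intervalIntegral.integral_add, intervalIntegral.integral_const_mul]
  rw [← prim, hA, integral_mul_prim hQ hA, integral_mul_prim_sq hQ hA, hB,
    integral_mul_prim_mul_prim_conj hQ hA, integral_mul_prim_conj_sq hQ hA]
  ring

lemma integral_mul_I_mul_prim_add (hQ : Continuous Q) (hA : A T = 0) {h : ℝ → ℂ}
    (hh : Continuous h) (c : ℂ) :
    ∫ t in (0:ℝ)..T, Q t * (I * prim h t + c) = -I * ∫ t in (0:ℝ)..T, A t * h t := by
  rw [integral_mul_eq_neg_integral_prim_mul hQ
    (fun t => ((hasDerivAt_prim hh t).const_mul I).add_const c) (by fun_prop) hA,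
    ← integral_const_mul, ← intervalIntegral.integral_neg]
  exact integral_congr fun t _ => by ring

lemma integral_mul_reducedTerm (hQ : Continuous Q) (hA : A T = 0) (n : ℕ) :
    ∫ t in (0:ℝ)..T, Q t * reducedTerm Q σ n t
      = -I * ∫ t in (0:ℝ)..T, A t * reducedSource Q σ n t := by
  simp_rw [reducedTerm_apply]
  exact integral_mul_I_mul_prim_add hQ hA (continuous_reducedSource hQ n) _

lemma integral_mul_reducedTerm_two (hQ : Continuous Q) (hA : A T = 0)
    (hB : ∫ t in (0:ℝ)..T, Q t * J t = 0) :
    ∫ t in (0:ℝ)..T, Q t * reducedTerm Q σ 2 t = 0 := by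
  rw [integral_mul_quadratic hQ hA hB (σ 2) (I * σ 1 ^ 2) 0 (-I) 0 0 fun t => by
    rw [reducedTerm_two hQ]; ring]
  ring

lemma integral_mul_reducedTerm_three (hQ : Continuous Q) (hA : A T = 0)
    (hB : ∫ t in (0:ℝ)..T, Q t * J t = 0) :
    ∫ t in (0:ℝ)..T, Q t * reducedTerm Q σ 3 t = 2 * σ 1 * K := by
  have hAW : ∫ t in (0:ℝ)..T, Q t * (A t * reducedTerm Q σ 2 t) = I * K :=
    (integral_mul_quadratic hQ hA hB 0 (σ 2) (I * σ 1 ^ 2) 0 (-I) 0 fun t => by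
      rw [reducedTerm_two hQ]; ring).trans (by ring)
  rw [integral_mul_reducedTerm hQ hA, integral_congr fun t _ => by
    rw [reducedSource_three, show ∀ a b c d : ℂ, a * (b * (c * d)) = b * (c * (a * d)) by
      intros; ring], intervalIntegral.integral_const_mul, hAW]
  linear_combination (-2 * σ 1 * K) * I_sq

lemma secularIntegral_eq_zero_of_le_three (hQ : Continuous Q) (hA : A T = 0)
    (hB : ∫ t in (0:ℝ)..T, Q t * J t = 0) {n : ℕ} (hn : n ≤ 3) :
    secularIntegral Q σ T n = 0 := by
  interval_cases n
  · simp [secularIntegral, reducedSource, seqConv]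
  · simp [secularIntegral, reducedSource, seqConv]
  · rw [secularIntegral, integral_congr fun τ _ => reducedSource_two τ]
    simp (disch := exact Continuous.intervalIntegrable (by fun_prop) _ _) only
      [intervalIntegral.integral_sub, intervalIntegral.integral_const_mul]
    rw [intervalIntegral_conj, ← prim, hA]
    simp
  · rw [secularIntegral, integral_congr fun τ _ => reducedSource_three τ,
      intervalIntegral.integral_const_mul, integral_mul_reducedTerm_two hQ hA hB, mul_zero]

lemma secularIntegral_four (hQ : Continuous Q) (hA : A T = 0)
    (hB : ∫ t in (0:ℝ)..T, Q t * J t = 0) :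
    secularIntegral Q σ T 4 = 2 * σ 1 ^ 2 * K - 2 * conj K := by
  have hsq := integral_mul_quadratic (P := fun t => reducedTerm Q σ 2 t ^ 2) hQ hA hB (σ 2 ^ 2)
    (2 * I * σ 1 ^ 2 * σ 2) (-σ 1 ^ 4) (-2 * I * σ 2) (2 * σ 1 ^ 2) (-1) fun t => by
      rw [reducedTerm_two hQ]
      linear_combination (σ 1 ^ 2 * A t - J t) ^ 2 * I_sq
  rw [secularIntegral, integral_congr fun τ _ => by
    rw [reducedSource_four, mul_add, mul_left_comm]]
  simp (disch := exact Continuous.intervalIntegrable (by fun_prop) _ _) only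
    [intervalIntegral.integral_add, intervalIntegral.integral_const_mul]
  rw [integral_mul_reducedTerm_three hQ hA hB, hsq]
  ring

lemma reducedSource_sub_reducedSource (n : ℕ) (τ : ℝ) :
    reducedSource Q σ n τ - reducedSource Q σ' n τ = Q τ * seqConv
      (fun p => reducedTerm Q σ p τ - reducedTerm Q σ' p τ)
      (fun p => reducedTerm Q σ p τ + reducedTerm Q σ' p τ) n := by
  rw [reducedSource, reducedSource, ← seqConv_self_sub_seqConv_self]
  ring

lemma reducedTerm_sub_reducedTerm (hQ : Continuous Q) (n : ℕ) (t : ℝ) :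
    reducedTerm Q σ n t - reducedTerm Q σ' n t = I * prim (fun τ => Q τ * seqConv
      (fun p => reducedTerm Q σ p τ - reducedTerm Q σ' p τ)
      (fun p => reducedTerm Q σ p τ + reducedTerm Q σ' p τ) n) t + (σ n - σ' n) := by
  simp_rw [← reducedSource_sub_reducedSource]
  rw [reducedTerm_apply, reducedTerm_apply, prim, prim, prim, intervalIntegral.integral_sub
    ((continuous_reducedSource hQ n).intervalIntegrable _ _)
    ((continuous_reducedSource hQ n).intervalIntegrable _ _)]
  ring

lemma reducedTerm_eq_of_lt (hQ : Continuous Q) (h : ∀ j < m, σ j = σ' j) {n : ℕ}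
    (hn : n < m) (t : ℝ) : reducedTerm Q σ n t = reducedTerm Q σ' n t := by
  induction n using Nat.strong_induction_on generalizing t with
  | _ n ih =>
    rw [← sub_eq_zero, reducedTerm_sub_reducedTerm hQ, h n hn, sub_self, add_zero]
    have hconv : ∀ τ, seqConv (fun p => reducedTerm Q σ p τ - reducedTerm Q σ' p τ)
        (fun p => reducedTerm Q σ p τ + reducedTerm Q σ' p τ) n = 0 := fun τ =>
      seqConv_eq_zero _ fun p hp => sub_eq_zero.2 (ih p hp (by omega) τ)
    simp [prim, hconv]

lemma seqConv_sub_add_reducedTerm (hQ : Continuous Q) (hm : 1 ≤ m)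
    (h : ∀ j < m, σ j = σ' j) (k : ℕ) (τ : ℝ) :
    seqConv (fun p => reducedTerm Q σ p τ - reducedTerm Q σ' p τ)
      (fun p => reducedTerm Q σ p τ + reducedTerm Q σ' p τ) (m + k)
      = ∑ i ∈ range k, (reducedTerm Q σ (m + i) τ - reducedTerm Q σ' (m + i) τ)
          * (reducedTerm Q σ (k - i) τ + reducedTerm Q σ' (k - i) τ) :=
  seqConv_add_eq_sum_range _ hm (fun _ hp => sub_eq_zero.2 (reducedTerm_eq_of_lt hQ h hp τ)) k

lemma reducedTerm_sub_reducedTerm_of_eq_lt (hQ : Continuous Q) (h : ∀ j < m, σ j = σ' j)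
    (t : ℝ) : reducedTerm Q σ m t - reducedTerm Q σ' m t = σ m - σ' m := by
  have hconv : ∀ τ, seqConv (fun p => reducedTerm Q σ p τ - reducedTerm Q σ' p τ)
      (fun p => reducedTerm Q σ p τ + reducedTerm Q σ' p τ) m = 0 := fun τ =>
    seqConv_eq_zero _ fun p hp => sub_eq_zero.2 (reducedTerm_eq_of_lt hQ h hp τ)
  rw [reducedTerm_sub_reducedTerm hQ]
  simp [prim, hconv]

lemma reducedTerm_add_one_sub_of_eq_lt (hQ : Continuous Q) (hm : 2 ≤ m)
    (h : ∀ j < m, σ j = σ' j) (t : ℝ) :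
    reducedTerm Q σ (m + 1) t - reducedTerm Q σ' (m + 1) t
      = σ (m + 1) - σ' (m + 1) + 2 * I * σ 1 * (σ m - σ' m) * A t := by
  simp only [reducedTerm_sub_reducedTerm hQ (m + 1), seqConv_sub_add_reducedTerm hQ (by omega) h,
    sum_range_one, add_zero, Nat.sub_zero, reducedTerm_sub_reducedTerm_of_eq_lt hQ h,
    reducedTerm_one, h 1 (by omega), prim, intervalIntegral.integral_mul_const]
  ring

lemma integral_mul_reducedTerm_add_one_sub_mul (hQ : Continuous Q) (hA : A T = 0)
    (hB : ∫ t in (0:ℝ)..T, Q t * J t = 0) (hm : 2 ≤ m) (h : ∀ j < m, σ j = σ' j) :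
    ∫ t in (0:ℝ)..T, Q t * ((reducedTerm Q σ (m + 1) t - reducedTerm Q σ' (m + 1) t)
      * (reducedTerm Q σ 2 t + reducedTerm Q σ' 2 t)) = -4 * σ 1 * (σ m - σ' m) * K := by
  rw [integral_mul_quadratic hQ hA hB ((σ (m + 1) - σ' (m + 1)) * (σ 2 + σ' 2))
    (2 * I * σ 1 ^ 2 * (σ (m + 1) - σ' (m + 1)) + 2 * I * σ 1 * (σ m - σ' m) * (σ 2 + σ' 2))
    (-4 * σ 1 ^ 3 * (σ m - σ' m)) (-2 * I * (σ (m + 1) - σ' (m + 1)))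
    (4 * σ 1 * (σ m - σ' m)) 0 fun t => by
      rw [reducedTerm_add_one_sub_of_eq_lt hQ hm h, reducedTerm_two hQ, reducedTerm_two hQ,
        ← h 1 (by omega)]
      linear_combination (4 * σ 1 ^ 3 * (σ m - σ' m) * A t ^ 2
        - 4 * σ 1 * (σ m - σ' m) * A t * J t) * I_sq]
  ring

lemma integral_mul_reducedTerm_add_two_sub (hQ : Continuous Q) (hA : A T = 0)
    (hB : ∫ t in (0:ℝ)..T, Q t * J t = 0) (hm : 2 ≤ m) (h : ∀ j < m, σ j = σ' j) :
    ∫ t in (0:ℝ)..T, Q t * (reducedTerm Q σ (m + 2) t - reducedTerm Q σ' (m + 2) t)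
      = 2 * (σ m - σ' m) * K := by
  have hc : Continuous fun τ => Q τ * seqConv
      (fun p => reducedTerm Q σ p τ - reducedTerm Q σ' p τ)
      (fun p => reducedTerm Q σ p τ + reducedTerm Q σ' p τ) (m + 2) := by
    simp_rw [← reducedSource_sub_reducedSource]
    exact (continuous_reducedSource hQ _).sub (continuous_reducedSource hQ _)
  rw [integral_congr fun t _ => congrArg (Q t * ·) (reducedTerm_sub_reducedTerm hQ (m + 2) t),
    integral_mul_I_mul_prim_add hQ hA hc, integral_congr fun t _ => mul_left_comm _ _ _,
    integral_mul_quadratic hQ hA hB 0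
      ((σ m - σ' m) * (σ 2 + σ' 2) + 2 * σ 1 * (σ (m + 1) - σ' (m + 1)))
      (6 * I * σ 1 ^ 2 * (σ m - σ' m)) 0 (-2 * I * (σ m - σ' m)) 0 fun t => by
        simp only [seqConv_sub_add_reducedTerm hQ (by omega) h 2, sum_range_succ,
          sum_range_zero, zero_add, add_zero, Nat.sub_zero, Nat.reduceSub,
          reducedTerm_sub_reducedTerm_of_eq_lt hQ h, reducedTerm_add_one_sub_of_eq_lt hQ hm h,
          reducedTerm_two hQ, reducedTerm_one, ← h 1 (by omega)]
        ring]
  linear_combination (-2 * (σ m - σ' m) * K) * I_sq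

theorem secularIntegral_add_three (hQ : Continuous Q) (hA : A T = 0)
    (hB : ∫ t in (0:ℝ)..T, Q t * J t = 0) (hm : 2 ≤ m) (h : ∀ j < m, σ j = σ' j) :
    secularIntegral Q σ T (m + 3)
      = secularIntegral Q σ' T (m + 3) + 4 * σ 1 * (σ m - σ' m) * K := by
  have hsplit (t : ℝ) : reducedSource Q σ (m + 3) t - reducedSource Q σ' (m + 3) t
      = (σ m - σ' m) * (Q t * reducedTerm Q σ 3 t) + (σ m - σ' m) * (Q t * reducedTerm Q σ' 3 t)
        + Q t * ((reducedTerm Q σ (m + 1) t - reducedTerm Q σ' (m + 1) t)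
          * (reducedTerm Q σ 2 t + reducedTerm Q σ' 2 t))
        + 2 * σ 1 * (Q t * (reducedTerm Q σ (m + 2) t - reducedTerm Q σ' (m + 2) t)) := by
    rw [reducedSource_sub_reducedSource, seqConv_sub_add_reducedTerm hQ (by omega) h 3]
    simp only [sum_range_succ, sum_range_zero, zero_add, add_zero, Nat.sub_zero, Nat.reduceSub,
      reducedTerm_sub_reducedTerm_of_eq_lt hQ h, reducedTerm_one, ← h 1 (by omega)]
    ring
  rw [← sub_eq_iff_eq_add', secularIntegral, secularIntegral,
    ← intervalIntegral.integral_sub ((continuous_reducedSource hQ _).intervalIntegrable _ _)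
      ((continuous_reducedSource hQ _).intervalIntegrable _ _), integral_congr fun t _ => hsplit t]
  simp (disch := exact Continuous.intervalIntegrable (by fun_prop) _ _) only
    [intervalIntegral.integral_add, intervalIntegral.integral_const_mul]
  rw [integral_mul_reducedTerm_three hQ hA hB, integral_mul_reducedTerm_three hQ hA hB,
    integral_mul_reducedTerm_add_one_sub_mul hQ hA hB hm h,
    integral_mul_reducedTerm_add_two_sub hQ hA hB hm h, ← h 1 (by omega)]
  ring

variable (Q T) in
/-- `κ (m + 2)` is chosen, via `secularIntegral_add_three`, to cancel `S (m + 5)`; the value at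
`0` is never used. -/
def secularConstants (κ₁ : ℂ) : ℕ → ℂ
  | 0 => 0
  | 1 => κ₁
  | m + 2 => -secularIntegral Q (fun j => if _ : j < m + 2 then secularConstants κ₁ j else 0)
      T (m + 5) / (4 * κ₁ * K)

lemma secularIntegral_secularConstants (hQ : Continuous Q) (hA : A T = 0)
    (hB : ∫ t in (0:ℝ)..T, Q t * J t = 0) (hK : K ≠ 0) {κ₁ : ℂ} (hκ₁ : κ₁ ^ 2 * K = conj K) :
    ∀ n, secularIntegral Q (secularConstants Q T κ₁) T n = 0
  | 0 | 1 | 2 | 3 => secularIntegral_eq_zero_of_le_three hQ hA hB (by norm_num)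
  | 4 => by
    rw [secularIntegral_four hQ hA hB, secularConstants, ← hκ₁]
    ring
  | m + 5 => by
    have hκ₁0 : κ₁ ≠ 0 := by
      rintro rfl
      exact hK (by simpa using hκ₁.symm)
    rw [secularIntegral_add_three hQ hA hB (m := m + 2) (by omega)
      (σ' := fun j => if _ : j < m + 2 then secularConstants Q T κ₁ j else 0)
      fun j hj => by rw [dif_pos hj], secularConstants, secularConstants]
    simp only [lt_irrefl, dite_false, sub_zero]
    field_simp
    ring

theorem exists_periodic_reducedTerm (hQ : Continuous Q) (hQT : Periodic Q T) (hA : A T = 0)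
    (hB : ∫ t in (0:ℝ)..T, Q t * J t = 0) (hK : K ≠ 0) :
    ∃ σ : ℕ → ℂ, ∀ n, Periodic (reducedTerm Q σ n) T := by
  obtain ⟨κ₁, hκ₁⟩ := IsAlgClosed.exists_pow_nat_eq (conj K / K) two_pos
  exact ⟨secularConstants Q T κ₁, periodic_reducedTerm hQ hQT <|
    secularIntegral_secularConstants hQ hA hB hK (by rw [hκ₁, div_mul_cancel₀ _ hK])⟩

theorem period_integrals_of_meanValueIs (hT : 0 < T) (hQ : Continuous Q) (hQT : Periodic Q T)
    (h0 : MeanValueIs Q 0) (h1 : MeanValueIs (fun t => Q t * J t) 0)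
    (h3 : ∃ M₃ : ℂ, MeanValueIs (fun t => Q t * prim (fun τ => Q τ * J τ) t) M₃ ∧ M₃ ≠ 0) :
    A T = 0 ∧ ∫ t in (0:ℝ)..T, Q t * J t = 0 ∧ K ≠ 0 := by
  have hA : A T = 0 := by simpa [prim] using h0.integral_eq hT hQ hQT
  have hJT : Periodic J T :=
    Periodic.prim (fun t => by rw [hQT t]) (by fun_prop) (by rw [← conj_prim, hA, map_zero])
  have hQJT : Periodic (fun t => Q t * J t) T := fun t => by simp only [hQT t, hJT t]
  have hB : ∫ t in (0:ℝ)..T, Q t * J t = 0 := by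
    simpa using h1.integral_eq hT (by fun_prop) hQJT
  have hBT : Periodic (prim fun τ => Q τ * J τ) T := hQJT.prim (by fun_prop) hB
  obtain ⟨M₃, hM₃, hM₃0⟩ := h3
  refine ⟨hA, hB, ?_⟩
  rw [hM₃.integral_eq hT (by fun_prop) fun t => by simp only [hQT t, hBT t]]
  exact mul_ne_zero (Complex.ofReal_ne_zero.2 hT.ne') hM₃0

lemma eq_mul_reducedTerm {q : ℝ → ℂ} {κ : ℕ → ℂ} {v : ℕ → ℝ → ℂ} (hQ : ∀ t, Q t = q t ^ 2)
    (hv1 : ∀ t, v 1 t = κ 1 * q t)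
    (hv2 : ∀ t, v 2 t = q t * (I * (∫ τ in (0:ℝ)..t, (κ 1 ^ 2 * Q τ - conj (Q τ))) + κ 2))
    (hv : ∀ n, 3 ≤ n → ∀ t, v n t =
      q t * (I * (∫ τ in (0:ℝ)..t, ∑ p ∈ Ico 1 n, v p τ * v (n - p) τ) + κ n)) :
    ∀ n, 1 ≤ n → ∀ t, v n t = q t * reducedTerm Q κ n t
  | 1, _, t => by rw [hv1, reducedTerm_one, mul_comm]
  | 2, _, t => by rw [hv2, reducedTerm_apply, prim, integral_congr fun τ _ => reducedSource_two τ]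
  | n + 3, _, t => by
    rw [hv _ (by omega), reducedTerm_apply, prim]
    refine congrArg (fun x => q t * (I * x + κ (n + 3))) (integral_congr fun τ _ => ?_)
    simp only [reducedSource, seqConv, mul_sum, if_neg (by omega : n + 3 ≠ 2), sub_zero]
    refine sum_congr rfl fun p hp => ?_
    have := mem_Ico.1 hp
    rw [eq_mul_reducedTerm hQ hv1 hv2 hv p (by omega),
      eq_mul_reducedTerm hQ hv1 hv2 hv (n + 3 - p) (by omega), hQ]
    ring

end SecularTerms

open SecularTerms in
theorem elimination_of_secular_terms_condition_III
    (ω : ℝ) (hω : 0 < ω) (T : ℝ) (hT : T = 2 * Real.pi / ω)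
    (f : ℝ → ℝ) (hf : Continuous f) (hper : Function.Periodic f T)
    (hmean : (∫ τ in (0:ℝ)..T, f τ) = 0)
    (q Q₀ Q₁ Q₃ : ℝ → ℂ)
    (hq : ∀ t : ℝ, q t = Complex.exp (Complex.I * ∫ τ in (0:ℝ)..t, (f τ : ℂ)))
    (hQ₀ : ∀ t : ℝ, Q₀ t = q t ^ 2)
    (hQ₁ : ∀ t : ℝ, Q₁ t = Q₀ t * ∫ τ in (0:ℝ)..t, (starRingEnd ℂ) (Q₀ τ))
    (hQ₃ : ∀ t : ℝ, Q₃ t = Q₀ t * ∫ τ in (0:ℝ)..t, Q₁ τ)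
    (h0 : MeanValueIs Q₀ 0) (h1 : MeanValueIs Q₁ 0)
    (h3 : ∃ M₃ : ℂ, MeanValueIs Q₃ M₃ ∧ M₃ ≠ 0) :
    ∃ κ : ℕ → ℂ, ∀ v : ℕ → ℝ → ℂ,
      (∀ t : ℝ, v 1 t = κ 1 * q t) →
      (∀ t : ℝ, v 2 t =
        q t * (Complex.I * (∫ τ in (0:ℝ)..t, ((κ 1) ^ 2 * Q₀ τ - (starRingEnd ℂ) (Q₀ τ))) + κ 2)) →
      (∀ n : ℕ, 3 ≤ n → ∀ t : ℝ, v n t =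
        q t * (Complex.I * (∫ τ in (0:ℝ)..t, ∑ p ∈ Finset.Ico 1 n, v p τ * v (n - p) τ) + κ n)) →
      ∀ n : ℕ, 1 ≤ n → Function.Periodic (v n) T := by
  have hT0 : 0 < T := hT ▸ by positivity
  have hF : Periodic (prim fun τ => (f τ : ℂ)) T := Periodic.prim (fun t => by rw [hper t])
    (by fun_prop) (by rw [prim, intervalIntegral.integral_ofReal, hmean, Complex.ofReal_zero])
  have hqT : Periodic q T := fun t => by
    rw [hq, hq]
    exact congrArg (fun x => exp (I * x)) (hF t)
  have hQc : Continuous Q₀ := by simp_rw [funext hQ₀, funext hq]; fun_prop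
  have hQT : Periodic Q₀ T := fun t => by rw [hQ₀, hQ₀, hqT t]
  obtain ⟨hA, hB, hK⟩ := period_integrals_of_meanValueIs hT0 hQc hQT h0 (funext hQ₁ ▸ h1)
    (by simpa only [funext hQ₃, funext hQ₁, prim] using h3)
  obtain ⟨κ, hκ⟩ := exists_periodic_reducedTerm hQc hQT hA hB hK
  refine ⟨κ, fun v hv1 hv2 hv n hn t => ?_⟩
  rw [eq_mul_reducedTerm hQ₀ hv1 hv2 hv n hn, eq_mul_reducedTerm hQ₀ hv1 hv2 hv n hn, hqT t,
    hκ n t]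
end
end

section
/- Let d ∈ ℕ and ω ∈ ℝ^d be such that m·ω ≠ 0 for every nonzero m ∈ ℤ^d. Let B, C : ℤ^d → ℂ satisfy: Σ_m |B_m| < ∞, C_0 = 0, Σ_{m≠0} |C_m| < ∞ and Σ_{m≠0} |C_m|/|m·ω| < ∞. Define b(t) = Σ_{m∈ℤ^d} B_m·e^{i(m·ω)t}, c(t) = Σ_{m∈ℤ^d} C_m·e^{i(m·ω)t}, and h(t) = b(t)·∫₀ᵗ c(τ) dτ. Then: (i) for every n ∈ ℤ^d the sum H_n = Σ_{m∈ℤ^d, m≠0} i·C_m·(B_n − B_{n−m})/(m·ω) converges absolutely, Σ_n |H_n| < ∞, and h(t) = Σ_{n∈ℤ^d} H_n·e^{i(n·ω)t} for all t ∈ ℝ; (ii) if moreover B_0 = 0 and C_m·B_{−m} = C_{−m}·B_m for all nonzero m ∈ ℤ^d, then H_0 = 0 and the mean value M(h) exists and equals 0. -/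
open Filter

noncomputable section

/-- Scalar product `m·ω = m₁ω₁ + ⋯ + m_dω_d` of a multi-index with a frequency vector. -/
def dotp {d : ℕ} (m : Fin d → ℤ) (ω : Fin d → ℝ) : ℝ := ∑ i, (m i : ℝ) * ω i

/-! Since `C₀ = 0` and the `C_m / (m·ω)` are absolutely summable, `c` can be integrated term by
term: `∫₀ᵗ c = Σ D_m e^{i(m·ω)t} - Σ D_m` with `D_m = C_m / (i m·ω)`. Multiplying by `b` convolves
absolutely summable coefficient sequences on `ℤᵈ`, which gives the absolutely summable
`H_n = Σ_m (B_{n-m} - B_n) D_m`. The mean value of an absolutely convergent trigonometric series is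
its coefficient at frequency `0`, here `H₀`; under the symmetry hypothesis `m ↦ B_{-m} D_m` is odd,
so `H₀ = 0`. -/

open MeasureTheory

def cexpI (x t : ℝ) : ℂ := Complex.exp (Complex.I * x * t)

lemma continuous_cexpI (x : ℝ) : Continuous (cexpI x) := by
  unfold cexpI; fun_prop

lemma norm_cexpI (x t : ℝ) : ‖cexpI x t‖ = 1 := by
  rw [cexpI, show Complex.I * x * t = (x * t : ℝ) * Complex.I by push_cast; ring,
    Complex.norm_exp_ofReal_mul_I]

lemma cexpI_mul_cexpI (x y t : ℝ) : cexpI x t * cexpI y t = cexpI (x + y) t := by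
  rw [cexpI, cexpI, cexpI, ← Complex.exp_add]
  push_cast; ring_nf

lemma cexpI_zero_left (t : ℝ) : cexpI 0 t = 1 := by simp [cexpI]

lemma cexpI_zero_right (x : ℝ) : cexpI x 0 = 1 := by simp [cexpI]

lemma hasDerivAt_cexpI (x t : ℝ) : HasDerivAt (cexpI x) (Complex.I * x * cexpI x t) t := by
  have := (((hasDerivAt_id (t : ℂ)).const_mul (Complex.I * x)).cexp).comp_ofReal
  simp only [id, mul_one] at this
  exact this.congr_deriv (mul_comm _ _)

lemma integral_cexpI {x : ℝ} (hx : x ≠ 0) (a b : ℝ) :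
    ∫ t in a..b, cexpI x t = (cexpI x b - cexpI x a) / (Complex.I * x) := by
  have hIx : Complex.I * x ≠ 0 := mul_ne_zero Complex.I_ne_zero (Complex.ofReal_ne_zero.mpr hx)
  have hderiv (t : ℝ) : HasDerivAt (fun s => cexpI x s / (Complex.I * x)) (cexpI x t) t := by
    simpa [mul_div_cancel_left₀ _ hIx] using (hasDerivAt_cexpI x t).div_const (Complex.I * x)
  rw [intervalIntegral.integral_eq_sub_of_hasDerivAt (fun t _ => hderiv t)
    ((continuous_cexpI x).intervalIntegrable a b), sub_div]

lemma norm_integral_cexpI_le {x : ℝ} (hx : x ≠ 0) (a b : ℝ) :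
    ‖∫ t in a..b, cexpI x t‖ ≤ 2 / |x| := by
  rw [integral_cexpI hx, norm_div, norm_mul, Complex.norm_I, one_mul, Complex.norm_real,
    Real.norm_eq_abs]
  gcongr
  calc ‖cexpI x b - cexpI x a‖ ≤ ‖cexpI x b‖ + ‖cexpI x a‖ := norm_sub_le _ _
    _ = 2 := by rw [norm_cexpI, norm_cexpI]; norm_num

lemma norm_average_cexpI_le (x : ℝ) {T : ℝ} (hT : 0 < T) :
    ‖(1 / (2 * T)) • ∫ t in (-T)..T, cexpI x t‖ ≤ 1 := by
  have hint : ‖∫ t in (-T)..T, cexpI x t‖ ≤ 1 * |T - -T| :=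
    intervalIntegral.norm_integral_le_of_norm_le_const fun t _ => (norm_cexpI x t).le
  rw [norm_smul, Real.norm_of_nonneg (by positivity), one_div_mul_eq_div, div_le_one (by positivity)]
  calc _ ≤ 1 * |T - -T| := hint
    _ = 2 * T := by rw [abs_of_pos (by linarith)]; ring

lemma meanValueIs_cexpI (x : ℝ) : MeanValueIs (cexpI x) (if x = 0 then 1 else 0) := by
  unfold MeanValueIs
  split_ifs with hx
  · refine tendsto_const_nhds.congr' ?_
    filter_upwards [eventually_gt_atTop 0] with T hT
    simp only [hx, cexpI_zero_left, intervalIntegral.integral_const, smul_smul]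
    rw [show 1 / (2 * T) * (T - -T) = 1 by field_simp; ring, one_smul]
  · refine squeeze_zero_norm' ?_
      ((tendsto_const_nhds (x := 2 / |x|)).div_atTop (tendsto_id.const_mul_atTop two_pos))
    filter_upwards [eventually_gt_atTop 0] with T hT
    rw [norm_smul, Real.norm_of_nonneg (by positivity), one_div_mul_eq_div]
    exact div_le_div_of_nonneg_right (norm_integral_cexpI_le hx _ _) (by positivity)

def trigSeries {ι : Type*} (ν : ι → ℝ) (a : ι → ℂ) (t : ℝ) : ℂ := ∑' n, a n * cexpI (ν n) t

section trigSeries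

variable {ι : Type*} (ν : ι → ℝ) {a : ι → ℂ}

lemma summable_norm_mul_cexpI (ha : Summable fun n => ‖a n‖) (t : ℝ) :
    Summable fun n => ‖a n * cexpI (ν n) t‖ :=
  ha.congr fun n => by rw [norm_mul, norm_cexpI, mul_one]

lemma trigSeries_sub {b : ι → ℂ} (ha : Summable fun n => ‖a n‖) (hb : Summable fun n => ‖b n‖)
    (t : ℝ) : trigSeries ν a t - trigSeries ν b t = trigSeries ν (a - b) t := by
  rw [trigSeries, trigSeries, trigSeries, ← Summable.tsum_sub
    (summable_norm_mul_cexpI ν ha t).of_norm (summable_norm_mul_cexpI ν hb t).of_norm]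
  exact tsum_congr fun n => (sub_mul _ _ _).symm

variable [Countable ι]

lemma hasSum_intervalIntegral_trigSeries (ha : Summable fun n => ‖a n‖) (s u : ℝ) :
    HasSum (fun n => a n * ∫ t in s..u, cexpI (ν n) t) (∫ t in s..u, trigSeries ν a t) := by
  have := intervalIntegral.hasSum_integral_of_dominated_convergence (fun n _ => ‖a n‖)
    (F := fun n t => a n * cexpI (ν n) t) (f := trigSeries ν a) (a := s) (b := u) (μ := volume)
    (fun n => (continuous_const.mul (continuous_cexpI _)).aestronglyMeasurable)
    (fun n => ae_of_all _ fun t _ => by rw [norm_mul, norm_cexpI, mul_one])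
    (ae_of_all _ fun _ _ => ha) intervalIntegrable_const
    (ae_of_all _ fun t _ => (summable_norm_mul_cexpI ν ha t).of_norm.hasSum)
  simpa only [intervalIntegral.integral_const_mul] using this

lemma meanValueIs_trigSeries (ha : Summable fun n => ‖a n‖) :
    MeanValueIs (trigSeries ν a) (∑' n, if ν n = 0 then a n else 0) := by
  have haverage (T : ℝ) : (1 / (2 * T)) • ∫ t in (-T)..T, trigSeries ν a t
      = ∑' n, a n * ((1 / (2 * T)) • ∫ t in (-T)..T, cexpI (ν n) t) := by
    simp only [mul_smul_comm]
    exact (((hasSum_intervalIntegral_trigSeries ν ha (-T) T).const_smul _).tsum_eq).symm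
  unfold MeanValueIs
  simp only [haverage]
  refine tendsto_tsum_of_dominated_convergence ha (fun n => ?_) ?_
  · simpa only [mul_ite, mul_one, mul_zero] using (meanValueIs_cexpI (ν n)).const_mul (a n)
  · filter_upwards [eventually_gt_atTop 0] with T hT n
    rw [norm_mul]
    exact mul_le_of_le_one_right (norm_nonneg _) (norm_average_cexpI_le _ hT)

end trigSeries

/-- The junk value `x / 0 = 0` makes the coefficient vanish where `ν m = 0`, which is harmless
as long as `C` vanishes there too. -/
def primitiveCoeff {ι : Type*} (ν : ι → ℝ) (C : ι → ℂ) (m : ι) : ℂ := C m / (Complex.I * ν m)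

section primitive

variable {ι : Type*} (ν : ι → ℝ) {C : ι → ℂ}

lemma norm_primitiveCoeff (m : ι) : ‖primitiveCoeff ν C m‖ = ‖C m‖ / |ν m| := by
  simp [primitiveCoeff]

lemma primitiveCoeff_eq (m : ι) : primitiveCoeff ν C m = -Complex.I * C m / ν m := by
  rw [primitiveCoeff, mul_comm, ← div_div, Complex.div_I]
  ring

lemma summable_norm_primitiveCoeff (hCν : Summable fun m => ‖C m‖ / |ν m|) :
    Summable fun m => ‖primitiveCoeff ν C m‖ :=
  hCν.congr fun m => (norm_primitiveCoeff ν m).symm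

lemma mul_integral_cexpI {m : ι} (hC0 : ν m = 0 → C m = 0) (t : ℝ) :
    C m * ∫ τ in (0 : ℝ)..t, cexpI (ν m) τ = primitiveCoeff ν C m * (cexpI (ν m) t - 1) := by
  by_cases hm : ν m = 0
  · simp [primitiveCoeff, hC0 hm]
  · rw [integral_cexpI hm, cexpI_zero_right, primitiveCoeff]
    ring

lemma intervalIntegral_trigSeries [Countable ι] (hC : Summable fun m => ‖C m‖)
    (hC0 : ∀ m, ν m = 0 → C m = 0) (hCν : Summable fun m => ‖C m‖ / |ν m|) (t : ℝ) :
    ∫ τ in (0 : ℝ)..t, trigSeries ν C τ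
      = trigSeries ν (primitiveCoeff ν C) t - ∑' m, primitiveCoeff ν C m := by
  have hD := summable_norm_primitiveCoeff ν hCν
  rw [← (hasSum_intervalIntegral_trigSeries ν hC 0 t).tsum_eq, trigSeries,
    ← Summable.tsum_sub (summable_norm_mul_cexpI ν hD t).of_norm hD.of_norm]
  exact tsum_congr fun m => by rw [mul_integral_cexpI ν (hC0 m), mul_sub_one]

end primitive

def convolutionShear (G : Type*) [AddGroup G] : G × G ≃ G × G where
  toFun p := (p.1 - p.2, p.2)
  invFun p := (p.1 + p.2, p.2)
  left_inv p := by simp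
  right_inv p := by simp

section convolution

variable {G R : Type*} [AddCommGroup G] [NormedRing R] {a b : G → R}

lemma summable_norm_mul_sub (ha : Summable fun n => ‖a n‖) (hb : Summable fun n => ‖b n‖) :
    Summable fun p : G × G => ‖a (p.1 - p.2) * b p.2‖ :=
  ((convolutionShear G).summable_iff (f := fun p : G × G => ‖a p.1 * b p.2‖)).mpr (ha.mul_norm hb)

lemma summable_norm_convolution (ha : Summable fun n => ‖a n‖) (hb : Summable fun n => ‖b n‖) :
    Summable fun k => ‖∑' m, a (k - m) * b m‖ := by
  have hprod := summable_norm_mul_sub ha hb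
  refine .of_nonneg_of_le (fun k => norm_nonneg _)
    (fun k => norm_tsum_le_tsum_norm (hprod.prod_factor k)) ?_
  exact (hprod.hasSum.prod_fiberwise fun k => (hprod.prod_factor k).hasSum).summable

lemma summable_norm_sub_mul (ha : Summable fun n => ‖a n‖) (hb : Summable fun n => ‖b n‖)
    (n : G) : Summable fun m => ‖(a (n - m) - a n) * b m‖ := by
  refine .of_norm_bounded (((summable_norm_mul_sub ha hb).prod_factor n).add
    (hb.mul_left ‖a n‖)) fun m => ?_
  rw [norm_norm, sub_mul]
  exact (norm_sub_le _ _).trans (add_le_add le_rfl (norm_mul_le _ _))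

variable [CompleteSpace R]

lemma tsum_mul_tsum_eq_tsum_convolution (ha : Summable fun n => ‖a n‖)
    (hb : Summable fun n => ‖b n‖) :
    (∑' n, a n) * (∑' m, b m) = ∑' k, ∑' m, a (k - m) * b m := by
  rw [tsum_mul_tsum_of_summable_norm ha hb, ← (convolutionShear G).tsum_eq]
  exact (summable_norm_mul_sub ha hb).of_norm.tsum_prod

lemma tsum_sub_mul_eq (ha : Summable fun n => ‖a n‖) (hb : Summable fun n => ‖b n‖) (n : G) :
    ∑' m, (a (n - m) - a n) * b m = ∑' m, a (n - m) * b m - a n * ∑' m, b m := by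
  rw [← hb.of_norm.tsum_mul_left, ← Summable.tsum_sub
    ((summable_norm_mul_sub ha hb).prod_factor n).of_norm (hb.of_norm.mul_left (a n))]
  exact tsum_congr fun m => sub_mul _ _ _

lemma summable_norm_tsum_sub_mul (ha : Summable fun n => ‖a n‖) (hb : Summable fun n => ‖b n‖) :
    Summable fun n => ‖∑' m, (a (n - m) - a n) * b m‖ := by
  refine .of_nonneg_of_le (fun n => norm_nonneg _) (fun n => ?_)
    ((summable_norm_convolution ha hb).add (ha.mul_right ‖∑' m, b m‖))
  rw [tsum_sub_mul_eq ha hb n]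
  exact (norm_sub_le _ _).trans (add_le_add le_rfl (norm_mul_le _ _))

end convolution

lemma Function.Odd.tsum_eq_zero {α β : Type*} [AddGroup α] [AddCommGroup β] [TopologicalSpace β]
    [IsTopologicalAddGroup β] [T2Space β] [IsAddTorsionFree β] {f : α → β} (hf : f.Odd) :
    ∑' a, f a = 0 := by
  rw [← neg_eq_self, ← tsum_neg, ← (Equiv.neg α).tsum_eq f]
  exact tsum_congr fun a => (hf a).symm

def mulPrimitiveCoeff {G : Type*} [AddCommGroup G] (ν : G → ℝ) (B C : G → ℂ) (n : G) : ℂ :=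
  ∑' m, (B (n - m) - B n) * primitiveCoeff ν C m

section mulPrimitive

variable {G : Type*} [AddCommGroup G] (ν : G →+ ℝ) {B C : G → ℂ}

lemma trigSeries_mul_trigSeries (hB : Summable fun n => ‖B n‖) (hC : Summable fun n => ‖C n‖)
    (t : ℝ) :
    trigSeries ν B t * trigSeries ν C t = trigSeries ν (fun k => ∑' m, B (k - m) * C m) t := by
  rw [trigSeries, trigSeries, tsum_mul_tsum_eq_tsum_convolution (summable_norm_mul_cexpI ν hB t)
    (summable_norm_mul_cexpI ν hC t), trigSeries]
  refine tsum_congr fun k => ?_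
  rw [← tsum_mul_right]
  refine tsum_congr fun m => ?_
  rw [show ν k = ν (k - m) + ν m by rw [map_sub, sub_add_cancel], ← cexpI_mul_cexpI]
  ring

lemma mul_intervalIntegral_trigSeries [Countable G] (hB : Summable fun n => ‖B n‖)
    (hC : Summable fun m => ‖C m‖) (hC0 : ∀ m, ν m = 0 → C m = 0)
    (hCν : Summable fun m => ‖C m‖ / |ν m|) (t : ℝ) :
    trigSeries ν B t * ∫ τ in (0 : ℝ)..t, trigSeries ν C τ
      = trigSeries ν (mulPrimitiveCoeff ν B C) t := by
  have hD := summable_norm_primitiveCoeff ν hCν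
  set K := ∑' m, primitiveCoeff ν C m
  have hBK : trigSeries ν B t * K = trigSeries ν (fun n => B n * K) t := by
    rw [trigSeries, trigSeries, ← tsum_mul_right]
    exact tsum_congr fun n => by ring
  have hBK_summable : Summable fun n => ‖B n * K‖ := by
    simpa only [norm_mul] using hB.mul_right ‖K‖
  rw [intervalIntegral_trigSeries ν hC hC0 hCν, mul_sub, trigSeries_mul_trigSeries ν hB hD, hBK,
    trigSeries_sub ν (summable_norm_convolution hB hD) hBK_summable]
  congr 1
  funext n
  exact (tsum_sub_mul_eq hB hD n).symm

lemma mulPrimitiveCoeff_zero (hB0 : B 0 = 0) (hsym : ∀ m, C m * B (-m) = C (-m) * B m) :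
    mulPrimitiveCoeff ν B C 0 = 0 := by
  refine Function.Odd.tsum_eq_zero fun m => ?_
  simp only [primitiveCoeff, zero_sub, neg_neg, hB0, sub_zero, map_neg, Complex.ofReal_neg]
  linear_combination hsym m / (Complex.I * ν m)

end mulPrimitive

@[simps]
def dotpAddHom {d : ℕ} (ω : Fin d → ℝ) : (Fin d → ℤ) →+ ℝ where
  toFun m := dotp m ω
  map_zero' := by simp [dotp]
  map_add' m n := by simp [dotp, add_mul, Finset.sum_add_distrib]

theorem fourier_coefficients_of_primitive
    (d : ℕ) (ω : Fin d → ℝ)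
    (hω : ∀ m : Fin d → ℤ, m ≠ 0 → dotp m ω ≠ 0)
    (B C : (Fin d → ℤ) → ℂ)
    (hB : Summable fun m : Fin d → ℤ => ‖B m‖)
    (hC0 : C 0 = 0)
    (hC : Summable fun m : Fin d → ℤ => if m = 0 then 0 else ‖C m‖)
    (hCω : Summable fun m : Fin d → ℤ => if m = 0 then 0 else ‖C m‖ / |dotp m ω|)
    (b c h : ℝ → ℂ)
    (hb : ∀ t : ℝ, b t = ∑' m : Fin d → ℤ, B m * Complex.exp (Complex.I * (dotp m ω : ℂ) * (t : ℂ)))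
    (hc : ∀ t : ℝ, c t = ∑' m : Fin d → ℤ, C m * Complex.exp (Complex.I * (dotp m ω : ℂ) * (t : ℂ)))
    (hh : ∀ t : ℝ, h t = b t * ∫ τ in (0:ℝ)..t, c τ)
    (H : (Fin d → ℤ) → ℂ)
    (hH : ∀ n : Fin d → ℤ, H n = ∑' m : Fin d → ℤ,
      if m = 0 then 0 else Complex.I * C m * (B n - B (n - m)) / (dotp m ω : ℂ)) :
    (∀ n : Fin d → ℤ, Summable fun m : Fin d → ℤ =>
      ‖if m = 0 then (0 : ℂ) else Complex.I * C m * (B n - B (n - m)) / (dotp m ω : ℂ)‖) ∧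
    (Summable fun n : Fin d → ℤ => ‖H n‖) ∧
    (∀ t : ℝ, h t = ∑' n : Fin d → ℤ, H n * Complex.exp (Complex.I * (dotp n ω : ℂ) * (t : ℂ))) ∧
    (B 0 = 0 →
      (∀ m : Fin d → ℤ, m ≠ 0 → C m * B (-m) = C (-m) * B m) →
      H 0 = 0 ∧ MeanValueIs h 0) := by
  set ν := dotpAddHom ω with hν
  have hν0 (m) (hm : ν m = 0) : m = 0 := by_contra fun hm' => hω m hm' hm
  have hCnorm : Summable fun m => ‖C m‖ := hC.congr fun m => by split_ifs with hm <;> simp [hm, hC0]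
  have hCν : Summable fun m => ‖C m‖ / |ν m| :=
    hCω.congr fun m => by split_ifs with hm <;> simp [hm, hν, hC0]
  have hD := summable_norm_primitiveCoeff ν hCν
  have hterm (n m) : (if m = 0 then 0 else Complex.I * C m * (B n - B (n - m)) / (dotp m ω : ℂ))
      = (B (n - m) - B n) * primitiveCoeff ν C m := by
    rw [primitiveCoeff_eq, ite_eq_right_iff.mpr fun hm => by simp [hm, hC0], hν,
      dotpAddHom_apply]
    ring
  have hHeq : H = mulPrimitiveCoeff ν B C := funext fun n => (hH n).trans (tsum_congr (hterm n))
  have hHsum : Summable fun n => ‖H n‖ := by rw [hHeq]; exact summable_norm_tsum_sub_mul hB hD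
  have hht : h = trigSeries ν H := funext fun t => by
    rw [hh, show b = trigSeries ν B from funext hb, show c = trigSeries ν C from funext hc, hHeq,
      mul_intervalIntegral_trigSeries ν hB hCnorm (fun m hm => hν0 m hm ▸ hC0) hCν]
  refine ⟨fun n => (summable_norm_sub_mul hB hD n).congr fun m => by rw [hterm], hHsum,
    fun t => congrFun hht t, fun hB0 hsym => ?_⟩
  have hH0 : H 0 = 0 := hHeq ▸ mulPrimitiveCoeff_zero ν hB0 fun m =>
    (eq_or_ne m 0).elim (fun hm => by simp [hm]) (hsym m)
  refine ⟨hH0, ?_⟩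
  convert meanValueIs_trigSeries ν hHsum
  exact ((tsum_congr fun n => ite_eq_right_iff.mpr fun hn => by rw [hν0 n hn, hH0]).trans
    tsum_zero).symm
end
end

section
/- Let b, c : ℝ → ℂ be continuous and set B(t) = ∫₀ᵗ b(τ) dτ and C(t) = ∫₀ᵗ c(τ) dτ. Assume that B and C are bounded on ℝ and that the mean value M(b·C) exists. Then the mean value M(c·B) exists and M(b·C) = −M(c·B). -/
open Filter

noncomputable section

theorem mean_value_antisymmetry
    (b c : ℝ → ℂ) (hb : Continuous b) (hc : Continuous c)
    (B C : ℝ → ℂ)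
    (hB : ∀ t : ℝ, B t = ∫ τ in (0:ℝ)..t, b τ)
    (hC : ∀ t : ℝ, C t = ∫ τ in (0:ℝ)..t, c τ)
    (hBbdd : ∃ M : ℝ, ∀ t : ℝ, ‖B t‖ ≤ M)
    (hCbdd : ∃ M : ℝ, ∀ t : ℝ, ‖C t‖ ≤ M)
    (L : ℂ) (hL : MeanValueIs (fun t => b t * C t) L) :
    MeanValueIs (fun t => c t * B t) (-L) := by
  obtain ⟨MB, hMB⟩ := hBbdd
  obtain ⟨MC, hMC⟩ := hCbdd
  have hMB0 : 0 ≤ MB := le_trans (norm_nonneg _) (hMB 0)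
  have hMC0 : 0 ≤ MC := le_trans (norm_nonneg _) (hMC 0)
  have hBderiv : ∀ t : ℝ, HasDerivAt B (b t) t := by
    intro t
    have : HasDerivAt (fun u => ∫ τ in (0:ℝ)..u, b τ) (b t) t :=
      intervalIntegral.integral_hasDerivAt_right (hb.intervalIntegrable _ _)
        (hb.stronglyMeasurableAtFilter _ _) hb.continuousAt
    exact this.congr_of_eventuallyEq (Eventually.of_forall fun u => hB u)
  have hCderiv : ∀ t : ℝ, HasDerivAt C (c t) t := by
    intro t
    have : HasDerivAt (fun u => ∫ τ in (0:ℝ)..u, c τ) (c t) t :=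
      intervalIntegral.integral_hasDerivAt_right (hc.intervalIntegrable _ _)
        (hc.stronglyMeasurableAtFilter _ _) hc.continuousAt
    exact this.congr_of_eventuallyEq (Eventually.of_forall fun u => hC u)
  have hBcont : Continuous B := by
    have : Differentiable ℝ B := fun t => (hBderiv t).differentiableAt
    exact this.continuous
  have hCcont : Continuous C := by
    have : Differentiable ℝ C := fun t => (hCderiv t).differentiableAt
    exact this.continuous
  -- integration by parts
  have key : ∀ T : ℝ,
      (∫ t in (-T)..T, c t * B t) =
        (B T * C T - B (-T) * C (-T)) - ∫ t in (-T)..T, b t * C t := by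
    intro T
    have hibp : (∫ t in (-T)..T, b t * C t + B t * c t) =
        B T * C T - B (-T) * C (-T) :=
      intervalIntegral.integral_deriv_mul_eq_sub
        (fun x _ => hBderiv x) (fun x _ => hCderiv x)
        (hb.intervalIntegrable _ _) (hc.intervalIntegrable _ _)
    have hadd : (∫ t in (-T)..T, b t * C t + B t * c t) =
        (∫ t in (-T)..T, b t * C t) + ∫ t in (-T)..T, B t * c t :=
      intervalIntegral.integral_add ((hb.mul hCcont).intervalIntegrable _ _)
        ((hBcont.mul hc).intervalIntegrable _ _)
    have : (∫ t in (-T)..T, B t * c t) =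
        (B T * C T - B (-T) * C (-T)) - ∫ t in (-T)..T, b t * C t := by
      rw [← hibp, hadd]; ring
    simpa [mul_comm] using this
  have h1 : Tendsto (fun T : ℝ => (1 / (2 * T)) •
      (B T * C T - B (-T) * C (-T))) atTop (nhds 0) := by
    apply squeeze_zero_norm' (a := fun T : ℝ => 1 / (2 * T) * (2 * (MB * MC)))
    · filter_upwards [eventually_gt_atTop (0:ℝ)] with T hT
      rw [norm_smul]
      have h1 : ‖B T * C T - B (-T) * C (-T)‖ ≤ 2 * (MB * MC) := by
        calc ‖B T * C T - B (-T) * C (-T)‖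
            ≤ ‖B T * C T‖ + ‖B (-T) * C (-T)‖ := norm_sub_le _ _
          _ ≤ MB * MC + MB * MC := by
              rw [norm_mul, norm_mul]
              have := mul_le_mul (hMB T) (hMC T) (norm_nonneg _) hMB0
              have := mul_le_mul (hMB (-T)) (hMC (-T)) (norm_nonneg _) hMB0
              linarith
          _ = 2 * (MB * MC) := by ring
      have h2 : ‖(1 / (2 * T))‖ = 1 / (2 * T) := by
        rw [Real.norm_eq_abs, abs_of_pos (by positivity)]
      rw [h2]
      exact mul_le_mul_of_nonneg_left h1 (by positivity)
    · have h2T : Tendsto (fun T : ℝ => 2 * T) atTop atTop :=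
        (tendsto_id (α := ℝ)).const_mul_atTop two_pos
      have hz : Tendsto (fun T : ℝ => 1 / (2 * T)) atTop (nhds 0) := by
        exact (tendsto_inv_atTop_zero.comp h2T).congr fun T => (one_div _).symm
      simpa using hz.mul_const (2 * (MB * MC))
  have hfinal := h1.sub hL
  rw [zero_sub] at hfinal
  unfold MeanValueIs
  refine hfinal.congr fun T => ?_
  simp only []
  simp only [key T, smul_sub]
end
end

section
/- Let a, b, c : ℝ → ℂ be continuous and set A(t) = ∫₀ᵗ a, C(t) = ∫₀ᵗ c, H(t) = ∫₀ᵗ b(τ)·C(τ) dτ. Assume that A, C and H are bounded on ℝ and that the mean value M(a·H) exists. Then the mean value M(b·A·C) exists and M(a·H) = −M(b·A·C), i.e., M( a(t)·∫₀ᵗ b(τ)·(∫₀^τ c) dτ ) = −M( b(t)·(∫₀ᵗ a)·(∫₀ᵗ c) ). If moreover K(t) = ∫₀ᵗ b(τ)·A(τ) dτ is bounded on ℝ, then the mean value M(c·K) exists and M(a·H) = M(c·K), i.e., M( a(t)·∫₀ᵗ b(τ)·(∫₀^τ c) dτ ) = M( c(t)·∫₀ᵗ b(τ)·(∫₀^τ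 a) dτ ). -/
open Filter

noncomputable section

lemma hasDerivAt_primitive (f : ℝ → ℂ) (hf : Continuous f) (t : ℝ) :
    HasDerivAt (fun u => ∫ τ in (0:ℝ)..u, f τ) (f t) t :=
  intervalIntegral.integral_hasDerivAt_right (hf.intervalIntegrable _ _)
    (hf.stronglyMeasurableAtFilter _ _) hf.continuousAt

lemma mean_congr (h₁ h₂ : ℝ → ℂ) (hh : ∀ t, h₁ t = h₂ t) (L : ℂ)
    (h : MeanValueIs h₁ L) : MeanValueIs h₂ L := by
  have : h₁ = h₂ := funext hh
  rwa [← this]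

lemma mean_key (f g F G : ℝ → ℂ) (hf : Continuous f) (hg : Continuous g)
    (hF : ∀ t, HasDerivAt F (f t) t) (hG : ∀ t, HasDerivAt G (g t) t)
    (Mb : ℝ) (hbd : ∀ t, ‖F t * G t‖ ≤ Mb)
    (L : ℂ) (hL : MeanValueIs (fun t => f t * G t) L) :
    MeanValueIs (fun t => F t * g t) (-L) := by
  have hFc : Continuous F := continuous_iff_continuousAt.mpr fun t => (hF t).continuousAt
  have hGc : Continuous G := continuous_iff_continuousAt.mpr fun t => (hG t).continuousAt
  have hprod : ∀ t : ℝ, HasDerivAt (fun u => F u * G u) (f t * G t + F t * g t) t :=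
    fun t => (hF t).mul (hG t)
  have hint1 : ∀ T : ℝ, IntervalIntegrable (fun t => f t * G t) MeasureTheory.volume (-T) T :=
    fun T => (hf.mul hGc).intervalIntegrable _ _
  have hint2 : ∀ T : ℝ, IntervalIntegrable (fun t => F t * g t) MeasureTheory.volume (-T) T :=
    fun T => (hFc.mul hg).intervalIntegrable _ _
  have hkey : ∀ T : ℝ, (∫ t in (-T)..T, f t * G t) + (∫ t in (-T)..T, F t * g t)
      = F T * G T - F (-T) * G (-T) := by
    intro T
    rw [← intervalIntegral.integral_add (hint1 T) (hint2 T)]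
    exact intervalIntegral.integral_eq_sub_of_hasDerivAt (fun x _ => hprod x)
      (((hf.mul hGc).add (hFc.mul hg)).intervalIntegrable _ _)
  have heq : ∀ T : ℝ, (1 / (2 * T) : ℝ) • ∫ t in (-T)..T, F t * g t
      = (1 / (2 * T) : ℝ) • (F T * G T - F (-T) * G (-T))
        - (1 / (2 * T) : ℝ) • ∫ t in (-T)..T, f t * G t := by
    intro T
    rw [← smul_sub]
    congr 1
    have := hkey T
    linear_combination this  -- maybe works on ℂ
  have h0 : Tendsto (fun T : ℝ => (1 / (2 * T) : ℝ) • (F T * G T - F (-T) * G (-T)))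
      atTop (nhds 0) := by
    apply squeeze_zero_norm' (a := fun T : ℝ => Mb / T)
    · filter_upwards [eventually_gt_atTop (0:ℝ)] with T hT
      rw [norm_smul]
      have h1 : ‖F T * G T - F (-T) * G (-T)‖ ≤ 2 * Mb :=
        le_trans (norm_sub_le _ _) (by linarith [hbd T, hbd (-T)])
      have h2 : ‖(1 / (2 * T) : ℝ)‖ = 1 / (2 * T) := by
        rw [Real.norm_eq_abs, abs_of_pos]; positivity
      rw [h2]
      calc (1 / (2 * T)) * ‖F T * G T - F (-T) * G (-T)‖ ≤ (1 / (2 * T)) * (2 * Mb) := by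
            apply mul_le_mul_of_nonneg_left h1; positivity
        _ = Mb / T := by field_simp
    · exact Tendsto.div_atTop tendsto_const_nhds tendsto_id
  have := h0.sub hL
  rw [zero_sub] at this
  refine this.congr fun T => (heq T).symm

theorem mean_value_iterated_integral
    (a b c : ℝ → ℂ) (ha : Continuous a) (hb : Continuous b) (hc : Continuous c)
    (A C H : ℝ → ℂ)
    (hA : ∀ t : ℝ, A t = ∫ τ in (0:ℝ)..t, a τ)
    (hC : ∀ t : ℝ, C t = ∫ τ in (0:ℝ)..t, c τ)
    (hH : ∀ t : ℝ, H t = ∫ τ in (0:ℝ)..t, b τ * C τ)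
    (hAbdd : ∃ M : ℝ, ∀ t : ℝ, ‖A t‖ ≤ M)
    (hCbdd : ∃ M : ℝ, ∀ t : ℝ, ‖C t‖ ≤ M)
    (hHbdd : ∃ M : ℝ, ∀ t : ℝ, ‖H t‖ ≤ M)
    (L : ℂ) (hL : MeanValueIs (fun t => a t * H t) L) :
    MeanValueIs (fun t => b t * A t * C t) (-L) ∧
    ∀ K : ℝ → ℂ, (∀ t : ℝ, K t = ∫ τ in (0:ℝ)..t, b τ * A τ) →
      (∃ M : ℝ, ∀ t : ℝ, ‖K t‖ ≤ M) →
      MeanValueIs (fun t => c t * K t) L := by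
  have hAd : ∀ t, HasDerivAt A (a t) t := by
    intro t
    have := hasDerivAt_primitive a ha t
    rwa [show (fun u => ∫ τ in (0:ℝ)..u, a τ) = A from funext fun u => (hA u).symm] at this
  have hCd : ∀ t, HasDerivAt C (c t) t := by
    intro t
    have := hasDerivAt_primitive c hc t
    rwa [show (fun u => ∫ τ in (0:ℝ)..u, c τ) = C from funext fun u => (hC u).symm] at this
  have hCc : Continuous C := continuous_iff_continuousAt.mpr fun t => (hCd t).continuousAt
  have hAc : Continuous A := continuous_iff_continuousAt.mpr fun t => (hAd t).continuousAt
  have hHd : ∀ t, HasDerivAt H (b t * C t) t := by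
    intro t
    have := hasDerivAt_primitive (fun τ => b τ * C τ) (hb.mul hCc) t
    rwa [show (fun u => ∫ τ in (0:ℝ)..u, b τ * C τ) = H from funext fun u => (hH u).symm] at this
  obtain ⟨MA, hMA⟩ := hAbdd
  obtain ⟨MC, hMC⟩ := hCbdd
  obtain ⟨MH, hMH⟩ := hHbdd
  have hbAC : MeanValueIs (fun t => A t * (b t * C t)) (-L) := by
    have hbnd : ∀ t : ℝ, ‖A t * H t‖ ≤ MA * MH := fun t => by
      rw [norm_mul]
      exact mul_le_mul (hMA t) (hMH t) (norm_nonneg _) (le_trans (norm_nonneg _) (hMA t))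
    exact mean_key a (fun t => b t * C t) A H ha (hb.mul hCc) hAd hHd (MA * MH) hbnd L hL
  have hfirst : MeanValueIs (fun t => b t * A t * C t) (-L) :=
    mean_congr _ _ (fun t => by ring) _ hbAC
  refine ⟨hfirst, fun K hK hKbdd => ?_⟩
  obtain ⟨MK, hMK⟩ := hKbdd
  have hKd : ∀ t, HasDerivAt K (b t * A t) t := by
    intro t
    have := hasDerivAt_primitive (fun τ => b τ * A τ) (hb.mul hAc) t
    rwa [show (fun u => ∫ τ in (0:ℝ)..u, b τ * A τ) = K from funext fun u => (hK u).symm] at this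
  have hbAC' : MeanValueIs (fun t => (b t * A t) * C t) (-L) :=
    mean_congr _ _ (fun t => by ring) _ hbAC
  have hcK : MeanValueIs (fun t => K t * c t) (-(-L)) := by
    have hbnd : ∀ t : ℝ, ‖K t * C t‖ ≤ MK * MC := fun t => by
      rw [norm_mul]
      exact mul_le_mul (hMK t) (hMC t) (norm_nonneg _) (le_trans (norm_nonneg _) (hMK t))
    exact mean_key (fun t => b t * A t) c K C (hb.mul hAc) hc hKd hCd (MK * MC) hbnd (-L) hbAC'
  rw [neg_neg] at hcK
  exact mean_congr _ _ (fun t => by ring) _ hcK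
end
end

section
/- Let a, b, c : ℝ → ℂ be continuous and set A(t) = ∫₀ᵗ a, B(t) = ∫₀ᵗ b, C(t) = ∫₀ᵗ c, H₁(t) = ∫₀ᵗ b·C, H₂(t) = ∫₀ᵗ c·A, H₃(t) = ∫₀ᵗ a·B. Assume that A, B, C, H₁, H₂, H₃ are all bounded on ℝ and that the mean values M(a·H₁), M(b·H₂), M(c·H₃) exist. Then M(a·H₁) + M(b·H₂) + M(c·H₃) = 0, i.e., M( a(t)·∫₀ᵗ b(τ)(∫₀^τ c) dτ ) + M( b(t)·∫₀ᵗ c(τ)(∫₀^τ a) dτ ) + M( c(t)·∫₀ᵗ a(τ)(∫₀^τ b) dτ ) = 0. -/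
/-!
With `G = A H₁ + B H₂ + C H₃ - A B C`, the product rule and `H₁' = b C`, `H₂' = c A`, `H₃' = a B`
give `G' = a H₁ + b H₂ + c H₃`, since the terms `A b C`, `A B c`, `a B C` coming from
`A H₁ + B H₂ + C H₃` cancel against `(A B C)'`. As `G` is
bounded, `(1/(2T)) ∫_{-T}^{T} G' = (G T - G (-T)) / (2T) → 0`, while by linearity the same
averages tend to `M(a H₁) + M(b H₂) + M(c H₃)`.
-/

open Filter

noncomputable section

open Asymptotics MeasureTheory

theorem isBigO_top_one_iff {α E : Type*} [Norm E] {f : α → E} :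
    f =O[⊤] (fun _ => (1 : ℝ)) ↔ ∃ M, ∀ x, ‖f x‖ ≤ M := by
  simp only [isBigO_top, norm_one, mul_one]

section Primitive

variable {E : Type*} [NormedAddCommGroup E] [NormedSpace ℝ E] [CompleteSpace E]
  {f F : ℝ → E} {a : ℝ}

theorem hasDerivAt_of_forall_eq_integral (hf : Continuous f)
    (hF : ∀ t, F t = ∫ τ in a..t, f τ) (t : ℝ) : HasDerivAt F (f t) t := by
  rw [funext hF]
  exact (hf.integral_hasStrictDerivAt a t).hasDerivAt

theorem continuous_of_forall_eq_integral (hf : Continuous f)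
    (hF : ∀ t, F t = ∫ τ in a..t, f τ) : Continuous F :=
  continuous_iff_continuousAt.2 fun t => (hasDerivAt_of_forall_eq_integral hf hF t).continuousAt

end Primitive

section MeanValue

theorem MeanValueIs.unique {h : ℝ → ℂ} {L L' : ℂ} (hL : MeanValueIs h L)
    (hL' : MeanValueIs h L') : L = L' :=
  tendsto_nhds_unique hL hL'

theorem MeanValueIs.add {f g : ℝ → ℂ} {L L' : ℂ}
    (hfi : ∀ T : ℝ, IntervalIntegrable f volume (-T) T)
    (hgi : ∀ T : ℝ, IntervalIntegrable g volume (-T) T)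
    (hf : MeanValueIs f L) (hg : MeanValueIs g L') : MeanValueIs (f + g) (L + L') := by
  refine (Tendsto.add hf hg).congr fun T => ?_
  simp only [Pi.add_apply, intervalIntegral.integral_add (hfi T) (hgi T), smul_add]

theorem meanValueIs_zero_of_hasDerivAt {g G : ℝ → ℂ} (hG : ∀ t, HasDerivAt G (g t) t)
    (hgi : ∀ T : ℝ, IntervalIntegrable g volume (-T) T)
    (hGbdd : G =O[⊤] (fun _ => (1 : ℝ))) : MeanValueIs g 0 := by
  obtain ⟨K, hK⟩ := isBigO_top_one_iff.1 hGbdd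
  have hbound : ∀ᶠ T : ℝ in atTop, ‖(1 / (2 * T)) • ∫ t in (-T)..T, g t‖ ≤ K / T := by
    filter_upwards [eventually_gt_atTop (0 : ℝ)] with T hT
    rw [intervalIntegral.integral_eq_sub_of_hasDerivAt (fun t _ => hG t) (hgi T), norm_smul,
      Real.norm_eq_abs, abs_of_pos (by positivity)]
    calc 1 / (2 * T) * ‖G T - G (-T)‖
        ≤ 1 / (2 * T) * (2 * K) := by
          gcongr
          linarith [norm_sub_le (G T) (G (-T)), hK T, hK (-T)]
      _ = K / T := by field_simp
  exact squeeze_zero_norm' hbound (tendsto_const_nhds.div_atTop tendsto_id)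

end MeanValue

section CyclicPotential

variable {α 𝔸 : Type*} [NormedCommRing 𝔸]

def cyclicPotential (A B C H₁ H₂ H₃ : α → 𝔸) (t : α) : 𝔸 :=
  A t * H₁ t + B t * H₂ t + C t * H₃ t - A t * B t * C t

theorem isBigO_cyclicPotential {l : Filter α} {A B C H₁ H₂ H₃ : α → 𝔸}
    (hA : A =O[l] (fun _ => (1 : ℝ))) (hB : B =O[l] (fun _ => (1 : ℝ)))
    (hC : C =O[l] (fun _ => (1 : ℝ))) (hH₁ : H₁ =O[l] (fun _ => (1 : ℝ)))
    (hH₂ : H₂ =O[l] (fun _ => (1 : ℝ))) (hH₃ : H₃ =O[l] (fun _ => (1 : ℝ))) :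
    cyclicPotential A B C H₁ H₂ H₃ =O[l] (fun _ => (1 : ℝ)) := by
  have hABC : (fun t => A t * B t * C t) =O[l] (fun _ => (1 : ℝ) * 1) := by
    simpa only [mul_one] using (hA.mul hB).mul hC
  unfold cyclicPotential
  simpa only [mul_one] using
    (((hA.mul hH₁).add (hB.mul hH₂)).add (hC.mul hH₃)).sub hABC

theorem hasDerivAt_cyclicPotential [NormedAlgebra ℝ 𝔸] {a b c A B C H₁ H₂ H₃ : ℝ → 𝔸} {t : ℝ}
    (hA : HasDerivAt A (a t) t) (hB : HasDerivAt B (b t) t) (hC : HasDerivAt C (c t) t)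
    (hH₁ : HasDerivAt H₁ (b t * C t) t) (hH₂ : HasDerivAt H₂ (c t * A t) t)
    (hH₃ : HasDerivAt H₃ (a t * B t) t) :
    HasDerivAt (cyclicPotential A B C H₁ H₂ H₃) (a t * H₁ t + b t * H₂ t + c t * H₃ t) t := by
  refine ((((hA.fun_mul hH₁).fun_add (hB.fun_mul hH₂)).fun_add (hC.fun_mul hH₃)).fun_sub
    ((hA.fun_mul hB).fun_mul hC)).congr_deriv ?_
  ring

end CyclicPotential

theorem mean_value_cyclic_identity
    (a b c : ℝ → ℂ) (ha : Continuous a) (hb : Continuous b) (hc : Continuous c)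
    (A B C H₁ H₂ H₃ : ℝ → ℂ)
    (hA : ∀ t : ℝ, A t = ∫ τ in (0:ℝ)..t, a τ)
    (hB : ∀ t : ℝ, B t = ∫ τ in (0:ℝ)..t, b τ)
    (hC : ∀ t : ℝ, C t = ∫ τ in (0:ℝ)..t, c τ)
    (hH₁ : ∀ t : ℝ, H₁ t = ∫ τ in (0:ℝ)..t, b τ * C τ)
    (hH₂ : ∀ t : ℝ, H₂ t = ∫ τ in (0:ℝ)..t, c τ * A τ)
    (hH₃ : ∀ t : ℝ, H₃ t = ∫ τ in (0:ℝ)..t, a τ * B τ)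
    (hAbdd : ∃ M : ℝ, ∀ t : ℝ, ‖A t‖ ≤ M)
    (hBbdd : ∃ M : ℝ, ∀ t : ℝ, ‖B t‖ ≤ M)
    (hCbdd : ∃ M : ℝ, ∀ t : ℝ, ‖C t‖ ≤ M)
    (hH₁bdd : ∃ M : ℝ, ∀ t : ℝ, ‖H₁ t‖ ≤ M)
    (hH₂bdd : ∃ M : ℝ, ∀ t : ℝ, ‖H₂ t‖ ≤ M)
    (hH₃bdd : ∃ M : ℝ, ∀ t : ℝ, ‖H₃ t‖ ≤ M)
    (L₁ L₂ L₃ : ℂ)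
    (hL₁ : MeanValueIs (fun t => a t * H₁ t) L₁)
    (hL₂ : MeanValueIs (fun t => b t * H₂ t) L₂)
    (hL₃ : MeanValueIs (fun t => c t * H₃ t) L₃) :
    L₁ + L₂ + L₃ = 0 := by
  have hAc := continuous_of_forall_eq_integral ha hA
  have hBc := continuous_of_forall_eq_integral hb hB
  have hCc := continuous_of_forall_eq_integral hc hC
  have hH₁c := continuous_of_forall_eq_integral (hb.mul hCc) hH₁
  have hH₂c := continuous_of_forall_eq_integral (hc.mul hAc) hH₂
  have hH₃c := continuous_of_forall_eq_integral (ha.mul hBc) hH₃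
  have h₁ : ∀ T : ℝ, IntervalIntegrable (fun t => a t * H₁ t) volume (-T) T :=
    fun T => (ha.mul hH₁c).intervalIntegrable _ _
  have h₂ : ∀ T : ℝ, IntervalIntegrable (fun t => b t * H₂ t) volume (-T) T :=
    fun T => (hb.mul hH₂c).intervalIntegrable _ _
  have h₃ : ∀ T : ℝ, IntervalIntegrable (fun t => c t * H₃ t) volume (-T) T :=
    fun T => (hc.mul hH₃c).intervalIntegrable _ _
  have hsum := (hL₁.add h₁ h₂ hL₂).add (fun T => (h₁ T).add (h₂ T)) h₃ hL₃
  have hzero := meanValueIs_zero_of_hasDerivAt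
    (fun t => hasDerivAt_cyclicPotential (hasDerivAt_of_forall_eq_integral ha hA t)
      (hasDerivAt_of_forall_eq_integral hb hB t) (hasDerivAt_of_forall_eq_integral hc hC t)
      (hasDerivAt_of_forall_eq_integral (hb.mul hCc) hH₁ t)
      (hasDerivAt_of_forall_eq_integral (hc.mul hAc) hH₂ t)
      (hasDerivAt_of_forall_eq_integral (ha.mul hBc) hH₃ t))
    (fun T => ((h₁ T).add (h₂ T)).add (h₃ T))
    (isBigO_cyclicPotential (isBigO_top_one_iff.2 hAbdd) (isBigO_top_one_iff.2 hBbdd)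
      (isBigO_top_one_iff.2 hCbdd) (isBigO_top_one_iff.2 hH₁bdd) (isBigO_top_one_iff.2 hH₂bdd)
      (isBigO_top_one_iff.2 hH₃bdd))
  exact hsum.unique hzero
end
end

section
/- Let Q₀ : ℝ → ℂ be continuous with |Q₀(t)| = 1 for all t ∈ ℝ. Set P₀(t) = ∫₀ᵗ Q₀(τ) dτ, P̄₀(t) = ∫₀ᵗ conj(Q₀(τ)) dτ, Q₁(t) = Q₀(t)·P̄₀(t), and P₁(t) = ∫₀ᵗ Q₁(τ) dτ. Assume that P₀, P̄₀ and P₁ are bounded on ℝ and that the mean values M(Q₁·P̄₀), M(Q₀·P₁) and M(Q₀·P₀·P̄₀) exist. Then M(Q₁·P̄₀) = 2·conj( M(Q₀·P₁) ), i.e., M( Q₁(t)·∫₀ᵗ conj(Q₀) ) = 2·conj( M( Q₀(t)·∫₀ᵗ Q₁ ) ). -/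
/-! Since `P̄₀ = conj P₀` and `P₁' = Q₀ · conj P₀`, both `P₁ + conj P₁` and `P₀ · conj P₀` are
primitives of `2 Re (Q₀ · conj P₀)` vanishing at `0`, so they agree. With this identity the
bounded function `2 P̄₀ P₁ - P₀ P̄₀²` is a primitive of `Q₁ P̄₀ - 2 conj (Q₀ P₁)`, and the
derivative of a bounded function has mean value zero. -/

open Filter

noncomputable section

open MeasureTheory

namespace MeanValueIs

variable {f g : ℝ → ℂ} {a b : ℂ}

theorem unique_s11 (ha : MeanValueIs f a) (hb : MeanValueIs f b) : a = b :=
  tendsto_nhds_unique ha hb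

theorem const_mul (c : ℂ) (hf : MeanValueIs f a) : MeanValueIs (fun t => c * f t) (c * a) :=
  (Tendsto.const_mul c hf).congr fun T => by
    rw [intervalIntegral.integral_const_mul, mul_smul_comm]

theorem conj (hf : MeanValueIs f a) :
    MeanValueIs (fun t => starRingEnd ℂ (f t)) (starRingEnd ℂ a) :=
  ((Complex.continuous_conj.tendsto a).comp hf).congr fun T => by
    simp [intervalIntegral.intervalIntegral_conj, map_ofNat]

theorem sub (hf : MeanValueIs f a) (hg : MeanValueIs g b)
    (hfi : ∀ T, IntervalIntegrable f volume (-T) T)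
    (hgi : ∀ T, IntervalIntegrable g volume (-T) T) : MeanValueIs (fun t => f t - g t) (a - b) :=
  (Tendsto.sub hf hg).congr fun T => by
    rw [intervalIntegral.integral_sub (hfi T) (hgi T), smul_sub]

theorem zero_of_hasDerivAt_of_bounded {F : ℝ → ℂ} (hF : ∀ t, HasDerivAt F (f t) t)
    (hfi : ∀ T, IntervalIntegrable f volume (-T) T) (hFb : ∃ M, ∀ t, ‖F t‖ ≤ M) :
    MeanValueIs f 0 := by
  obtain ⟨M, hM⟩ := hFb
  have hdecay : Tendsto (fun T : ℝ => 1 / (2 * T)) atTop (nhds 0) :=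
    tendsto_const_nhds.div_atTop (tendsto_id.const_mul_atTop two_pos)
  have hbdd : IsBoundedUnder (· ≤ ·) atTop fun T : ℝ => ‖F T - F (-T)‖ :=
    isBoundedUnder_of ⟨M + M, fun T => (norm_sub_le _ _).trans (add_le_add (hM T) (hM (-T)))⟩
  refine (hdecay.zero_smul_isBoundedUnder_le hbdd).congr fun T => ?_
  rw [intervalIntegral.integral_eq_sub_of_hasDerivAt (fun t _ => hF t) (hfi T)]

end MeanValueIs

open scoped ComplexConjugate

theorem hasDerivAt_of_forall_eq_integral_s11 {E : Type*} [NormedAddCommGroup E] [NormedSpace ℝ E]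
    [CompleteSpace E] {f P : ℝ → E} (hf : Continuous f) (a : ℝ)
    (hP : ∀ t, P t = ∫ τ in a..t, f τ) (t : ℝ) : HasDerivAt P (f t) t := by
  obtain rfl : P = fun t => ∫ τ in a..t, f τ := funext hP
  exact (hf.integral_hasStrictDerivAt a t).hasDerivAt

theorem add_conj_eq_mul_conj_of_hasDerivAt {q P R : ℝ → ℂ} {a : ℝ}
    (hP : ∀ t, HasDerivAt P (q t) t) (hR : ∀ t, HasDerivAt R (q t * conj (P t)) t)
    (hPa : P a = 0) (hRa : R a = 0) (t : ℝ) : R t + conj (R t) = P t * conj (P t) := by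
  have hderiv : ∀ s, HasDerivAt (fun s => R s + conj (R s) - P s * conj (P s)) 0 s := fun s => by
    refine (((hR s).add (hR s).star).sub ((hP s).mul (hP s).star)).congr_deriv ?_
    simp only [Complex.star_def, map_mul, Complex.conj_conj]
    ring
  have := is_const_of_deriv_eq_zero (fun s => (hderiv s).differentiableAt)
    (fun s => (hderiv s).deriv) t a
  simp only [hPa, hRa, map_zero, add_zero, mul_zero, sub_zero] at this
  exact sub_eq_zero.1 this

theorem hasDerivAt_two_conj_mul_sub_mul_conj_sq {q P R : ℝ → ℂ} {a : ℝ}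
    (hP : ∀ t, HasDerivAt P (q t) t) (hR : ∀ t, HasDerivAt R (q t * conj (P t)) t)
    (hPa : P a = 0) (hRa : R a = 0) (t : ℝ) :
    HasDerivAt (fun t => 2 * conj (P t) * R t - P t * conj (P t) ^ 2)
      (q t * conj (P t) ^ 2 - 2 * conj (q t * R t)) t := by
  have hPc : HasDerivAt (fun t => conj (P t)) (conj (q t)) t := (hP t).star
  refine (((hPc.const_mul 2).mul (hR t)).sub ((hP t).mul (hPc.pow 2))).congr_deriv ?_
  have hre := add_conj_eq_mul_conj_of_hasDerivAt hP hR hPa hRa t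
  simp only [Pi.pow_apply, map_mul]
  linear_combination (2 * conj (q t)) * hre

theorem meanValueIs_mul_conj_sq_eq_two_conj {q P R : ℝ → ℂ} {a : ℝ} (hq : Continuous q)
    (hP : ∀ t, HasDerivAt P (q t) t) (hR : ∀ t, HasDerivAt R (q t * conj (P t)) t)
    (hPa : P a = 0) (hRa : R a = 0) (hPb : ∃ M, ∀ t, ‖P t‖ ≤ M) (hRb : ∃ M, ∀ t, ‖R t‖ ≤ M)
    {L₁ L₂ : ℂ} (h₁ : MeanValueIs (fun t => q t * conj (P t) ^ 2) L₁)
    (h₂ : MeanValueIs (fun t => q t * R t) L₂) : L₁ = 2 * conj L₂ := by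
  obtain ⟨MP, hMP⟩ := hPb
  obtain ⟨MR, hMR⟩ := hRb
  have hPcont : Continuous P := continuous_iff_continuousAt.2 fun t => (hP t).continuousAt
  have hRcont : Continuous R := continuous_iff_continuousAt.2 fun t => (hR t).continuousAt
  have hbound :
      ∀ t, ‖2 * conj (P t) * R t - P t * conj (P t) ^ 2‖ ≤ 2 * MP * MR + MP * MP ^ 2 := by
    intro t
    have hMP0 : 0 ≤ MP := (norm_nonneg _).trans (hMP 0)
    refine (norm_sub_le _ _).trans (add_le_add ?_ ?_) <;>
      simp only [norm_mul, norm_pow, Complex.norm_conj, Complex.norm_ofNat]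
    · gcongr
      exacts [hMP t, hMR t]
    · gcongr <;> exact hMP t
  have hint {h : ℝ → ℂ} (hh : Continuous h) (T : ℝ) : IntervalIntegrable h volume (-T) T :=
    hh.intervalIntegrable _ _
  have hzero : MeanValueIs (fun t => q t * conj (P t) ^ 2 - 2 * conj (q t * R t)) 0 :=
    MeanValueIs.zero_of_hasDerivAt_of_bounded
      (hasDerivAt_two_conj_mul_sub_mul_conj_sq hP hR hPa hRa) (hint (by fun_prop)) ⟨_, hbound⟩
  have hlim : MeanValueIs (fun t => q t * conj (P t) ^ 2 - 2 * conj (q t * R t))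
      (L₁ - 2 * conj L₂) :=
    h₁.sub (h₂.conj.const_mul 2) (hint (by fun_prop)) (hint (by fun_prop))
  exact sub_eq_zero.1 (hlim.unique_s11 hzero)

theorem mean_value_Q1_conjQ0_identity_general
    (Q₀ : ℝ → ℂ) (hQ₀cont : Continuous Q₀)
    (P₀ P₀bar Q₁ P₁ : ℝ → ℂ)
    (hP₀ : ∀ t : ℝ, P₀ t = ∫ τ in (0:ℝ)..t, Q₀ τ)
    (hP₀bar : ∀ t : ℝ, P₀bar t = ∫ τ in (0:ℝ)..t, (starRingEnd ℂ) (Q₀ τ))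
    (hQ₁ : ∀ t : ℝ, Q₁ t = Q₀ t * P₀bar t)
    (hP₁ : ∀ t : ℝ, P₁ t = ∫ τ in (0:ℝ)..t, Q₁ τ)
    (hP₀bdd : ∃ M : ℝ, ∀ t : ℝ, ‖P₀ t‖ ≤ M)
    (hP₁bdd : ∃ M : ℝ, ∀ t : ℝ, ‖P₁ t‖ ≤ M)
    (L₁ L₂ : ℂ)
    (hL₁ : MeanValueIs (fun t => Q₁ t * P₀bar t) L₁)
    (hL₂ : MeanValueIs (fun t => Q₀ t * P₁ t) L₂) :
    L₁ = 2 * (starRingEnd ℂ) L₂ := by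
  have hP₀' := hasDerivAt_of_forall_eq_integral_s11 hQ₀cont 0 hP₀
  have hP₀bar_eq : ∀ t, P₀bar t = conj (P₀ t) := fun t => by
    rw [hP₀bar, hP₀, intervalIntegral.intervalIntegral_conj]
  have hQ₁_eq : ∀ t, Q₁ t = Q₀ t * conj (P₀ t) := fun t => by rw [hQ₁, hP₀bar_eq]
  have hQ₁cont : Continuous Q₁ := by
    have hP₀cont : Continuous P₀ := continuous_iff_continuousAt.2 fun t => (hP₀' t).continuousAt
    rw [funext hQ₁_eq]
    fun_prop
  have hP₁' : ∀ t, HasDerivAt P₁ (Q₀ t * conj (P₀ t)) t := fun t => by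
    simpa only [hQ₁_eq] using hasDerivAt_of_forall_eq_integral_s11 hQ₁cont 0 hP₁ t
  refine meanValueIs_mul_conj_sq_eq_two_conj (a := 0) hQ₀cont hP₀' hP₁' (by simp [hP₀])
    (by simp [hP₁]) hP₀bdd hP₁bdd ?_ hL₂
  convert hL₁ using 2 with t
  rw [hQ₁_eq, hP₀bar_eq]
  ring

theorem mean_value_Q1_conjQ0_identity
    (Q₀ : ℝ → ℂ) (hQ₀cont : Continuous Q₀) (hQ₀abs : ∀ t : ℝ, ‖Q₀ t‖ = 1)
    (P₀ P₀bar Q₁ P₁ : ℝ → ℂ)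
    (hP₀ : ∀ t : ℝ, P₀ t = ∫ τ in (0:ℝ)..t, Q₀ τ)
    (hP₀bar : ∀ t : ℝ, P₀bar t = ∫ τ in (0:ℝ)..t, (starRingEnd ℂ) (Q₀ τ))
    (hQ₁ : ∀ t : ℝ, Q₁ t = Q₀ t * P₀bar t)
    (hP₁ : ∀ t : ℝ, P₁ t = ∫ τ in (0:ℝ)..t, Q₁ τ)
    (hP₀bdd : ∃ M : ℝ, ∀ t : ℝ, ‖P₀ t‖ ≤ M)
    (hP₀barbdd : ∃ M : ℝ, ∀ t : ℝ, ‖P₀bar t‖ ≤ M)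
    (hP₁bdd : ∃ M : ℝ, ∀ t : ℝ, ‖P₁ t‖ ≤ M)
    (L₁ L₂ : ℂ)
    (hL₁ : MeanValueIs (fun t => Q₁ t * P₀bar t) L₁)
    (hL₂ : MeanValueIs (fun t => Q₀ t * P₁ t) L₂)
    (hL₃ : ∃ L₃ : ℂ, MeanValueIs (fun t => Q₀ t * P₀ t * P₀bar t) L₃) :
    L₁ = 2 * (starRingEnd ℂ) L₂ :=
  mean_value_Q1_conjQ0_identity_general Q₀ hQ₀cont P₀ P₀bar Q₁ P₁ hP₀ hP₀bar hQ₁ hP₁ hP₀bdd hP₁bdd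
    L₁ L₂ hL₁ hL₂
end
end

section
/- For every χ > 0 there exists a constant B₀ > 0 such that for all m ∈ ℤ: Σ_{n∈ℤ} e^{−χ(|m−n|+|n|)} / (⟨m−n⟩²·⟨n⟩²) ≤ B₀·e^{−χ|m|}/⟨m⟩². -/
/-!
Since `|m| ≤ |m - n| + |n|`, the exponential factor is at most `e^{-χ|m|}`; since
`⟨m⟩ ≤ ⟨m - n⟩ + ⟨n⟩`, also `⟨m⟩² ≤ 2 (⟨m - n⟩² + ⟨n⟩²)`, which turns the weight
`1 / (⟨m - n⟩² ⟨n⟩²)` into `2 / ⟨m⟩² · (⟨m - n⟩⁻² + ⟨n⟩⁻²)`. Both terms sum over `n` to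
`∑ₖ ⟨k⟩⁻² < ∞`, so `B₀ = 4 ∑ₖ ⟨k⟩⁻²` works.
-/

noncomputable section

/-- `⟨m⟩ = |m|` for `m ≠ 0` and `⟨0⟩ = 1`. -/
def jnorm (m : ℤ) : ℝ := if m = 0 then 1 else |(m : ℝ)|

lemma one_le_jnorm (m : ℤ) : 1 ≤ jnorm m := by
  unfold jnorm
  split_ifs with h
  · rfl
  · exact_mod_cast Int.one_le_abs h

lemma jnorm_pos (m : ℤ) : 0 < jnorm m := one_pos.trans_le (one_le_jnorm m)

lemma abs_le_jnorm (m : ℤ) : |(m : ℝ)| ≤ jnorm m := by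
  unfold jnorm
  split_ifs with h <;> simp [h]

lemma jnorm_add_le (a b : ℤ) : jnorm (a + b) ≤ jnorm a + jnorm b := by
  by_cases h : a + b = 0
  · rw [jnorm, if_pos h]
    linarith [one_le_jnorm a, one_le_jnorm b]
  · rw [jnorm, if_neg h, Int.cast_add]
    exact (abs_add_le _ _).trans (add_le_add (abs_le_jnorm a) (abs_le_jnorm b))

lemma summable_inv_jnorm_sq : Summable fun k : ℤ => (jnorm k ^ 2)⁻¹ := by
  have hpow : Summable fun k : ℤ => ((k : ℝ) ^ 2)⁻¹ := by
    simpa only [one_div] using Real.summable_one_div_int_pow.mpr one_lt_two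
  refine (hpow.add (summable_of_ne_finset_zero (s := {0})
    (f := fun k : ℤ => if k = 0 then (1 : ℝ) else 0) (by simp_all))).congr fun k => ?_
  by_cases h : k = 0 <;> simp [h, jnorm, sq_abs]

lemma inv_sq_mul_sq_le_of_le_add {a b c : ℝ} (ha : 0 < a) (hb : 0 < b) (hc : 0 < c)
    (hcab : c ≤ a + b) :
    (a ^ 2 * b ^ 2)⁻¹ ≤ 2 / c ^ 2 * ((a ^ 2)⁻¹ + (b ^ 2)⁻¹) := by
  have hc2 : c ^ 2 ≤ 2 * (a ^ 2 + b ^ 2) := by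
    nlinarith [pow_le_pow_left₀ hc.le hcab 2, sq_nonneg (a - b)]
  rw [inv_add_inv (by positivity) (by positivity), div_mul_div_comm,
    inv_le_iff_one_le_mul₀ (by positivity), div_mul_eq_mul_div, one_le_div (by positivity)]
  exact mul_le_mul_of_nonneg_right hc2 (by positivity)

lemma summable_and_tsum_le_of_le_sub_add {G : Type*} [AddGroup G] {f g : G → ℝ} {c : ℝ}
    (m : G) (hg : Summable g) (hf₀ : ∀ n, 0 ≤ f n) (hfg : ∀ n, f n ≤ c * (g (m - n) + g n)) :
    Summable f ∧ ∑' n, f n ≤ 2 * c * ∑' k, g k := by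
  have hshift : Summable fun n => g (m - n) := (Equiv.subLeft m).summable_iff.mpr hg
  have hdom : Summable fun n => c * (g (m - n) + g n) := (hshift.add hg).mul_left c
  have hf : Summable f := hdom.of_nonneg_of_le hf₀ hfg
  refine ⟨hf, (hf.tsum_le_tsum hfg hdom).trans_eq ?_⟩
  have hshift_tsum : ∑' n, g (m - n) = ∑' k, g k := (Equiv.subLeft m).tsum_eq g
  rw [tsum_mul_left, hshift.tsum_add hg, hshift_tsum]
  ring

lemma exp_neg_mul_abs_sub_add_abs_le {χ : ℝ} (hχ : 0 ≤ χ) (m n : ℤ) :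
    Real.exp (-χ * (|((m - n : ℤ) : ℝ)| + |(n : ℝ)|)) ≤ Real.exp (-χ * |(m : ℝ)|) := by
  have htri : |(m : ℝ)| ≤ |((m - n : ℤ) : ℝ)| + |(n : ℝ)| := by
    simpa only [Int.cast_sub, sub_add_cancel] using abs_add_le ((m : ℝ) - n) n
  exact Real.exp_le_exp.mpr (by nlinarith)

theorem convolution_decay_bound (χ : ℝ) (hχ : 0 < χ) :
    ∃ B₀ : ℝ, 0 < B₀ ∧ ∀ m : ℤ,
      (Summable fun n : ℤ =>
        Real.exp (-χ * (|((m - n : ℤ) : ℝ)| + |(n : ℝ)|)) / (jnorm (m - n) ^ 2 * jnorm n ^ 2)) ∧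
      (∑' n : ℤ,
        Real.exp (-χ * (|((m - n : ℤ) : ℝ)| + |(n : ℝ)|)) / (jnorm (m - n) ^ 2 * jnorm n ^ 2))
        ≤ B₀ * Real.exp (-χ * |(m : ℝ)|) / jnorm m ^ 2 := by
  have hS : 0 < ∑' k : ℤ, (jnorm k ^ 2)⁻¹ :=
    summable_inv_jnorm_sq.tsum_pos (fun k => by positivity [jnorm_pos k]) 0 (by simp [jnorm])
  refine ⟨4 * ∑' k : ℤ, (jnorm k ^ 2)⁻¹, by positivity, fun m => ?_⟩
  obtain ⟨hsum, hle⟩ := summable_and_tsum_le_of_le_sub_add m summable_inv_jnorm_sq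
    (f := fun n : ℤ =>
      Real.exp (-χ * (|((m - n : ℤ) : ℝ)| + |(n : ℝ)|)) / (jnorm (m - n) ^ 2 * jnorm n ^ 2))
    (c := Real.exp (-χ * |(m : ℝ)|) * (2 / jnorm m ^ 2))
    (fun n => by positivity [jnorm_pos (m - n), jnorm_pos n])
    (fun n => by
      rw [div_eq_mul_inv, mul_assoc]
      refine mul_le_mul (exp_neg_mul_abs_sub_add_abs_le hχ.le m n) ?_ (by positivity [jnorm_pos n])
        (Real.exp_pos _).le
      exact inv_sq_mul_sq_le_of_le_add (jnorm_pos _) (jnorm_pos _) (jnorm_pos m)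
          (by simpa using jnorm_add_le (m - n) n))
  exact ⟨hsum, hle.trans_eq (by ring)⟩
end
end

section
/- Let Γ > 0 and let K : ℕ → ℝ satisfy 0 < K(1) = K(2) = K(3) = K(4) and, for every n ≥ 5, K(n) = Γ·[ Σ_{p=1}^{n−1} K(p)·K(n−p) + Σ_{p=2}^{n−1} K(p)·K(n+1−p) + Σ_{p=3}^{n−1} K(p)·K(n+2−p) + Σ_{p=4}^{n−1} K(p)·K(n+3−p) ]. If in addition K(4) ≤ K(5), then the sequence K is non-decreasing: K(n) ≤ K(n+1) for all n ≥ 1. -/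
/-!
Induction on `n`: once `K` is non-decreasing on `[1, n]` with `K 1 ≥ 0`, each of the four
convolution sums in the recursion can only grow when `n` is replaced by `n + 1`, because every
term `K p * K (n + k - p)` is bounded by `K p * K (n + 1 + k - p)` and one further non-negative term
`K n * K (k + 1)` appears. Multiplying by `Γ ≥ 0` gives `K n ≤ K (n + 1)`.
-/

open Finset

/-- The sum with index `k = 0, 1, 2, 3` in the recursion for `K n`. -/
def shiftedConv (K : ℕ → ℝ) (k n : ℕ) : ℝ :=
  ∑ p ∈ Ico (k + 1) n, K p * K (n + k - p)

lemma monotoneOn_Icc_of_le_succ {α : Type*} [Preorder α] {f : ℕ → α} {a b : ℕ}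
    (h : ∀ m, a ≤ m → m < b → f m ≤ f (m + 1)) : MonotoneOn f (Set.Icc a b) :=
  monotoneOn_of_le_succ Set.ordConnected_Icc fun m _ hm hsm =>
    h m hm.1 (by simp only [Set.mem_Icc, Order.succ_eq_add_one] at hsm; omega)

lemma shiftedConv_le_succ {K : ℕ → ℝ} {k n : ℕ} (hk : k < n) (hK1 : 0 ≤ K 1)
    (hK : MonotoneOn K (Set.Icc 1 n)) : shiftedConv K k n ≤ shiftedConv K k (n + 1) := by
  have hnonneg : ∀ m, 1 ≤ m → m ≤ n → 0 ≤ K m := fun m h1 hn =>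
    hK1.trans (hK ⟨le_rfl, by omega⟩ ⟨h1, hn⟩ h1)
  have hterms : ∑ p ∈ Ico (k + 1) n, K p * K (n + k - p)
      ≤ ∑ p ∈ Ico (k + 1) n, K p * K (n + 1 + k - p) := by
    refine sum_le_sum fun p hp => ?_
    rw [mem_Ico] at hp
    refine mul_le_mul_of_nonneg_left (hK ⟨by omega, by omega⟩ ⟨by omega, by omega⟩ (by omega))
      (hnonneg p (by omega) (by omega))
  have hlast : 0 ≤ K n * K (n + 1 + k - n) :=
    mul_nonneg (hnonneg n (by omega) le_rfl) (hnonneg _ (by omega) (by omega))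
  unfold shiftedConv
  rw [sum_Ico_succ_top (by omega : k + 1 ≤ n)]
  linarith

theorem le_succ_of_eq_mul_sum_shiftedConv {Γ : ℝ} (hΓ : 0 ≤ Γ) {K : ℕ → ℝ} {r N : ℕ}
    (hrN : r ≤ N) (hK1 : 0 ≤ K 1) (hbase : ∀ m, 1 ≤ m → m < N → K m ≤ K (m + 1))
    (hrec : ∀ n, N ≤ n → K n = Γ * ∑ k ∈ range r, shiftedConv K k n) :
    ∀ n, 1 ≤ n → K n ≤ K (n + 1) := by
  intro n hn
  induction n using Nat.strong_induction_on with
  | _ n ih =>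
  rcases lt_or_ge n N with hnN | hNn
  · exact hbase n hn hnN
  have hmono : MonotoneOn K (Set.Icc 1 n) :=
    monotoneOn_Icc_of_le_succ fun m hm hmn => ih m hmn hm
  rw [hrec n hNn, hrec (n + 1) (by omega)]
  refine mul_le_mul_of_nonneg_left (sum_le_sum fun k hk => ?_) hΓ
  exact shiftedConv_le_succ (by rw [mem_range] at hk; omega) hK1 hmono

theorem K_sequence_monotone
    (Γ : ℝ) (hΓ : 0 < Γ)
    (K : ℕ → ℝ) (hKpos : 0 < K 1)
    (h12 : K 1 = K 2) (h23 : K 2 = K 3) (h34 : K 3 = K 4)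
    (hrec : ∀ n : ℕ, 5 ≤ n → K n =
      Γ * ((∑ p ∈ Finset.Ico 1 n, K p * K (n - p))
         + (∑ p ∈ Finset.Ico 2 n, K p * K (n + 1 - p))
         + (∑ p ∈ Finset.Ico 3 n, K p * K (n + 2 - p))
         + (∑ p ∈ Finset.Ico 4 n, K p * K (n + 3 - p))))
    (h45 : K 4 ≤ K 5) :
    ∀ n : ℕ, 1 ≤ n → K n ≤ K (n + 1) := by
  have hrec' : ∀ n, 5 ≤ n → K n = Γ * ∑ k ∈ range 4, shiftedConv K k n := by
    intro n hn
    simp only [sum_range_succ, sum_range_zero, zero_add]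
    exact hrec n hn
  refine le_succ_of_eq_mul_sum_shiftedConv hΓ.le (by norm_num) hKpos.le ?_ hrec'
  intro m hm1 hm5
  interval_cases m
  exacts [h12.le, h23.le, h34.le, h45]
end
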